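/- arXiv:2311.11247 — 7 statements merged into one kernel-verified Lean document; each statement's English description precedes it below -/
import Mathlib

section
/- Let Ω = [0,∞) and suppose Assumptions 1(1) and 2 hold. Then the nonlinear operator Φ maps the positive cone L¹₊(Ω) into the bounded set {φ ∈ L¹₊(Ω) : ‖φ‖₁ ≤ α L (∫_Ω a N dx)(∫_Ω c N dx)}, and the image Φ(L¹₊(Ω)) has compact closure in L¹(Ω). -/
open MeasureTheory Set Filter Topology
open scoped ENNReal

/-- The nonlinear operator `(Φφ)(x) = N(x) ∫_Ω Θ(x,σ) N(σ)(1 - e^{-φ(σ)/N(σ)}) dσ` on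
`Ω = [0,∞)`, with `Θ(x,σ) = ∫_0^∞ A(τ,x,σ) dτ`. -/
noncomputable def PhiOpHalfLine (A : ℝ → ℝ → ℝ → ℝ) (N : ℝ → ℝ)
    (φ : ℝ → ℝ) (x : ℝ) : ℝ :=
  N x * ∫ σ in Ici (0:ℝ), (∫ τ in Ici (0:ℝ), A τ x σ) * N σ * (1 - Real.exp (-(φ σ / N σ)))


section Aux
variable (N : ℝ → ℝ) (A : ℝ → ℝ → ℝ → ℝ) (a b c : ℝ → ℝ) (α : ℝ)

/-- joint measurability of Θ -/
lemma theta_sm (hAmeas : Measurable (fun p : ℝ × ℝ × ℝ => A p.1 p.2.1 p.2.2)) :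
    StronglyMeasurable (fun p : ℝ × ℝ => ∫ τ in Ici (0:ℝ), A τ p.1 p.2) := by
  have h : StronglyMeasurable (fun q : (ℝ × ℝ) × ℝ => A q.2 q.1.1 q.1.2) := by
    have : Measurable (fun q : (ℝ × ℝ) × ℝ => (q.2, q.1.1, q.1.2)) := by fun_prop
    exact (hAmeas.comp this).stronglyMeasurable
  exact h.integral_prod_right'

lemma theta_nonneg (hAnn : ∀ τ x σ, 0 ≤ A τ x σ) (x σ : ℝ) :
    0 ≤ ∫ τ in Ici (0:ℝ), A τ x σ :=
  setIntegral_nonneg measurableSet_Ici (fun τ _ => hAnn τ x σ)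

lemma theta_le (hAmeas : Measurable (fun p : ℝ × ℝ × ℝ => A p.1 p.2.1 p.2.2))
    (hAnn : ∀ τ x σ, 0 ≤ A τ x σ)
    (hann : ∀ x, 0 ≤ a x) (hbnn : ∀ τ, 0 ≤ b τ) (hcnn : ∀ σ, 0 ≤ c σ)
    (hbint : IntegrableOn b (Ici 0))
    (hAub : ∀ τ ∈ Ici (0:ℝ), ∀ x ∈ Ici (0:ℝ), ∀ σ ∈ Ici (0:ℝ),
      A τ x σ ≤ α * (a x * b τ * c σ))
    {x σ : ℝ} (hx : x ∈ Ici (0:ℝ)) (hσ : σ ∈ Ici (0:ℝ)) :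
    (∫ τ in Ici (0:ℝ), A τ x σ) ≤ α * (∫ τ in Ici (0:ℝ), b τ) * a x * c σ := by
  have hslice : Measurable (fun τ => A τ x σ) := by
    have : Measurable (fun τ : ℝ => (τ, x, σ)) := by fun_prop
    exact hAmeas.comp this
  have hgint : IntegrableOn (fun τ => α * (a x * c σ) * b τ) (Ici 0) := hbint.const_mul _
  have hAint : IntegrableOn (fun τ => A τ x σ) (Ici 0) := by
    refine Integrable.mono' hgint hslice.aestronglyMeasurable ?_
    rw [ae_restrict_iff' measurableSet_Ici]
    refine ae_of_all _ fun τ hτ => ?_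
    rw [Real.norm_eq_abs, abs_of_nonneg (hAnn τ x σ)]
    calc A τ x σ ≤ α * (a x * b τ * c σ) := hAub τ hτ x hx σ hσ
      _ = α * (a x * c σ) * b τ := by ring
  calc (∫ τ in Ici (0:ℝ), A τ x σ) ≤ ∫ τ in Ici (0:ℝ), α * (a x * c σ) * b τ := by
        refine setIntegral_mono_on hAint hgint measurableSet_Ici fun τ hτ => ?_
        calc A τ x σ ≤ α * (a x * b τ * c σ) := hAub τ hτ x hx σ hσ
          _ = α * (a x * c σ) * b τ := by ring
    _ = α * (a x * c σ) * ∫ τ in Ici (0:ℝ), b τ := by rw [integral_const_mul]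
    _ = α * (∫ τ in Ici (0:ℝ), b τ) * a x * c σ := by ring


end Aux

set_option maxHeartbeats 2000000 in
set_option synthInstance.maxHeartbeats 400000 in
/-- for `Ω = [0,∞)`, under Assumptions 1(1) and 2, `Φ` maps `L¹₊(Ω)` into the
bounded set `{φ : ‖φ‖₁ ≤ α L (∫ a N)(∫ c N)}` and the image `Φ(L¹₊(Ω))` has compact closure
in `L¹(Ω)`. -/
theorem Phi_image_relatively_compact
    (N : ℝ → ℝ) (hNmeas : Measurable N) (hNnn : ∀ x, 0 ≤ N x)
    (hNint : IntegrableOn N (Ici 0))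
    (hNpos : ∀ᵐ x ∂(volume.restrict (Ici (0:ℝ))), 0 < N x)
    (A : ℝ → ℝ → ℝ → ℝ)
    (hAmeas : Measurable (fun p : ℝ × ℝ × ℝ => A p.1 p.2.1 p.2.2))
    (hAnn : ∀ τ x σ, 0 ≤ A τ x σ)
    -- Assumption 1(1)
    (α : ℝ) (hα : 1 < α)
    (a b c : ℝ → ℝ)
    (hameas : Measurable a) (hbmeas : Measurable b) (hcmeas : Measurable c)
    (hann : ∀ x, 0 ≤ a x) (hbnn : ∀ τ, 0 ≤ b τ) (hcnn : ∀ σ, 0 ≤ c σ)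
    (haN : IntegrableOn (fun x => a x * N x) (Ici 0))
    (hbint : IntegrableOn b (Ici 0))
    (hcN : IntegrableOn (fun x => c x * N x) (Ici 0))
    (hc2N : IntegrableOn (fun x => c x ^ 2 * N x) (Ici 0))
    (hAbound : ∀ τ ∈ Ici (0:ℝ), ∀ x ∈ Ici (0:ℝ), ∀ σ ∈ Ici (0:ℝ),
      a x * b τ * c σ ≤ A τ x σ ∧ A τ x σ ≤ α * (a x * b τ * c σ))
    -- Assumption 2
    (haNpos : ∀ f : ℝ → ℝ, Measurable f → (∀ x, 0 ≤ f x) → (∃ M, ∀ x, f x ≤ M) →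
      ¬ f =ᵐ[volume.restrict (Ici (0:ℝ))] 0 →
      0 < ∫ x in Ici (0:ℝ), f x * (a x * N x))
    (hcbdd : ∃ M, ∀ x, c x ≤ M)
    (hcpos : ∀ φ : ℝ → ℝ, IntegrableOn φ (Ici 0) →
      (∀ᵐ x ∂(volume.restrict (Ici (0:ℝ))), 0 ≤ φ x) →
      ¬ φ =ᵐ[volume.restrict (Ici (0:ℝ))] 0 →
      0 < ∫ x in Ici (0:ℝ), c x * φ x)
    (hΘshift : TendstoUniformlyOn
      (fun (h : ℝ) (σ : ℝ) => ∫ x in Ici (0:ℝ),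
        |indicator (Ici (0:ℝ)) (fun y => N y * ∫ τ in Ici (0:ℝ), A τ y σ) (x + h)
          - N x * ∫ τ in Ici (0:ℝ), A τ x σ|)
      (fun _ => 0) (nhds (0:ℝ)) (Ici 0)) :
    (∀ φ : ℝ → ℝ, IntegrableOn φ (Ici 0) →
      (∀ᵐ x ∂(volume.restrict (Ici (0:ℝ))), 0 ≤ φ x) →
      IntegrableOn (PhiOpHalfLine A N φ) (Ici 0) ∧
      (∀ᵐ x ∂(volume.restrict (Ici (0:ℝ))), 0 ≤ PhiOpHalfLine A N φ x) ∧
      (∫ x in Ici (0:ℝ), |PhiOpHalfLine A N φ x|)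
        ≤ α * (∫ τ in Ici (0:ℝ), b τ) * (∫ x in Ici (0:ℝ), a x * N x)
            * ∫ x in Ici (0:ℝ), c x * N x) ∧
    IsCompact (closure {g : Lp ℝ 1 (volume.restrict (Ici (0:ℝ))) |
      ∃ φ : ℝ → ℝ, IntegrableOn φ (Ici 0) ∧
        (∀ᵐ x ∂(volume.restrict (Ici (0:ℝ))), 0 ≤ φ x) ∧
        ⇑g =ᵐ[volume.restrict (Ici (0:ℝ))] PhiOpHalfLine A N φ}) := by
  classical
  haveI : Fact ((1:ℝ≥0∞) ≠ ∞) := ⟨ENNReal.one_ne_top⟩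
  set μ := volume.restrict (Ici (0:ℝ)) with hμdef
  set Θ : ℝ → ℝ → ℝ := fun x σ => ∫ τ in Ici (0:ℝ), A τ x σ with hΘdef
  set L : ℝ := ∫ τ in Ici (0:ℝ), b τ with hLdef
  set Ia : ℝ := ∫ x in Ici (0:ℝ), a x * N x with hIadef
  set Ic : ℝ := ∫ x in Ici (0:ℝ), c x * N x with hIcdef
  have hθSM : StronglyMeasurable (fun p : ℝ × ℝ => ∫ τ in Ici (0:ℝ), A τ p.1 p.2) :=
    theta_sm A hAmeas
  have hθnn : ∀ x σ, 0 ≤ ∫ τ in Ici (0:ℝ), A τ x σ := theta_nonneg A hAnn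
  have hθle : ∀ x ∈ Ici (0:ℝ), ∀ σ ∈ Ici (0:ℝ),
      (∫ τ in Ici (0:ℝ), A τ x σ) ≤ α * L * a x * c σ := fun x hx σ hσ =>
    theta_le A a b c α hAmeas hAnn hann hbnn hcnn hbint
      (fun τ hτ x hx σ hσ => (hAbound τ hτ x hx σ hσ).2) hx hσ
  have hkey : ∀ φ : ℝ → ℝ, IntegrableOn φ (Ici 0) →
      (∀ᵐ x ∂μ, 0 ≤ φ x) →
      AEStronglyMeasurable (PhiOpHalfLine A N φ) μ ∧
      (∀ x ∈ Ici (0:ℝ), |PhiOpHalfLine A N φ x| ≤ α * L * Ic * (a x * N x)) ∧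
      IntegrableOn (PhiOpHalfLine A N φ) (Ici 0) ∧
      (∀ᵐ x ∂μ, 0 ≤ PhiOpHalfLine A N φ x) ∧
      (∫ x in Ici (0:ℝ), |PhiOpHalfLine A N φ x|) ≤ α * L * Ia * Ic := by
    intro φ hφint hφnn
    set u : ℝ → ℝ := fun σ => 1 - Real.exp (-(φ σ / N σ)) with hudef
    have hLnn : 0 ≤ L := setIntegral_nonneg measurableSet_Ici fun τ _ => hbnn τ
    have hIcnn : 0 ≤ Ic := setIntegral_nonneg measurableSet_Ici
      fun x _ => mul_nonneg (hcnn x) (hNnn x)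
    have hu : ∀ᵐ σ ∂μ, 0 ≤ u σ ∧ u σ ≤ 1 := by
      filter_upwards [hNpos, hφnn] with σ h1 h2
      have ht : 0 ≤ φ σ / N σ := div_nonneg h2 h1.le
      have he1 : Real.exp (-(φ σ / N σ)) ≤ 1 := by
        rw [Real.exp_le_one_iff]; linarith
      have he0 : 0 < Real.exp (-(φ σ / N σ)) := Real.exp_pos _
      constructor <;> simp only [hudef] <;> linarith
    have huaem : AEMeasurable u μ := by
      have hφm : AEMeasurable φ μ := hφint.aemeasurable
      exact measurable_const.aemeasurable.sub
        (Real.continuous_exp.measurable.comp_aemeasurable ((hφm.div hNmeas.aemeasurable).neg))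
    -- rewrite Φ
    have hPhiEq : PhiOpHalfLine A N φ = fun x => N x * ∫ σ, Θ x σ * (N σ * u σ) ∂μ := by
      funext x
      unfold PhiOpHalfLine
      congr 1
      exact integral_congr_ae (ae_of_all _ fun σ => (mul_assoc _ _ _))
    have haesm : AEStronglyMeasurable (PhiOpHalfLine A N φ) μ := by
      rw [hPhiEq]
      have hF : AEStronglyMeasurable (fun p : ℝ × ℝ => Θ p.1 p.2 * (N p.2 * u p.2)) (μ.prod μ) :=
        hθSM.aestronglyMeasurable.mul
          (((hNmeas.aemeasurable.mul huaem).aestronglyMeasurable).comp_snd)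
      exact hNmeas.aestronglyMeasurable.mul hF.integral_prod_right'
    have hinner_bd : ∀ x ∈ Ici (0:ℝ), ‖∫ σ, Θ x σ * (N σ * u σ) ∂μ‖ ≤ α * L * a x * Ic := by
      intro x hx
      have hg : Integrable (fun σ => α * L * a x * (c σ * N σ)) μ := hcN.const_mul _
      have hbd : ‖∫ σ, Θ x σ * (N σ * u σ) ∂μ‖ ≤ ∫ σ, α * L * a x * (c σ * N σ) ∂μ := by
        refine norm_integral_le_of_norm_le hg ?_
        filter_upwards [hu, ae_restrict_mem measurableSet_Ici] with σ huσ hσ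
        have h0 : 0 ≤ Θ x σ * (N σ * u σ) :=
          mul_nonneg (hθnn x σ) (mul_nonneg (hNnn σ) huσ.1)
        rw [Real.norm_eq_abs, abs_of_nonneg h0]
        calc Θ x σ * (N σ * u σ) ≤ Θ x σ * (N σ * 1) := by
              exact mul_le_mul_of_nonneg_left
                (mul_le_mul_of_nonneg_left huσ.2 (hNnn σ)) (hθnn x σ)
          _ = Θ x σ * N σ := by ring
          _ ≤ (α * L * a x * c σ) * N σ :=
              mul_le_mul_of_nonneg_right (hθle x hx σ hσ) (hNnn σ)
          _ = α * L * a x * (c σ * N σ) := by ring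
      calc ‖∫ σ, Θ x σ * (N σ * u σ) ∂μ‖ ≤ ∫ σ, α * L * a x * (c σ * N σ) ∂μ := hbd
        _ = α * L * a x * Ic := by rw [integral_const_mul]
    have hptbd : ∀ x ∈ Ici (0:ℝ), |PhiOpHalfLine A N φ x| ≤ α * L * Ic * (a x * N x) := by
      intro x hx
      rw [hPhiEq]
      rw [abs_mul, abs_of_nonneg (hNnn x)]
      calc N x * |∫ σ, Θ x σ * (N σ * u σ) ∂μ| ≤ N x * (α * L * a x * Ic) := by
            exact mul_le_mul_of_nonneg_left (hinner_bd x hx) (hNnn x)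
        _ = α * L * Ic * (a x * N x) := by ring
    have hint : IntegrableOn (PhiOpHalfLine A N φ) (Ici 0) := by
      refine Integrable.mono' (haN.const_mul (α * L * Ic)) haesm ?_
      rw [ae_restrict_iff' measurableSet_Ici]
      exact ae_of_all _ fun x hx => hptbd x hx
    refine ⟨haesm, hptbd, hint, ?_, ?_⟩
    · refine ae_of_all _ fun x => ?_
      rw [hPhiEq]
      refine mul_nonneg (hNnn x) (integral_nonneg_of_ae ?_)
      filter_upwards [hu] with σ huσ
      exact mul_nonneg (hθnn x σ) (mul_nonneg (hNnn σ) huσ.1)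
    · calc (∫ x in Ici (0:ℝ), |PhiOpHalfLine A N φ x|)
          ≤ ∫ x in Ici (0:ℝ), α * L * Ic * (a x * N x) := by
            exact setIntegral_mono_on hint.abs (haN.const_mul _) measurableSet_Ici hptbd
        _ = α * L * Ic * Ia := by rw [integral_const_mul]
        _ = α * L * Ia * Ic := by ring
  refine ⟨fun φ h1 h2 => ⟨(hkey φ h1 h2).2.2.1, (hkey φ h1 h2).2.2.2.1,
    (hkey φ h1 h2).2.2.2.2⟩, ?_⟩
  have hkaesm : ∀ φ : ℝ → ℝ, IntegrableOn φ (Ici 0) → (∀ᵐ x ∂μ, 0 ≤ φ x) →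
      AEStronglyMeasurable (PhiOpHalfLine A N φ) μ := fun φ h1 h2 => (hkey φ h1 h2).1
  have hkbd : ∀ φ : ℝ → ℝ, IntegrableOn φ (Ici 0) → (∀ᵐ x ∂μ, 0 ≤ φ x) →
      ∀ x ∈ Ici (0:ℝ), |PhiOpHalfLine A N φ x| ≤ α * L * Ic * (a x * N x) :=
    fun φ h1 h2 => (hkey φ h1 h2).2.1
  set S : Set ↥(Lp ℝ 1 μ) := {g : ↥(Lp ℝ 1 μ) |
      ∃ φ : ℝ → ℝ, IntegrableOn φ (Ici 0) ∧
        (∀ᵐ x ∂μ, 0 ≤ φ x) ∧ ⇑g =ᵐ[μ] PhiOpHalfLine A N φ} with hSdef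
  -- main extraction
  have hext : ∀ f : ℕ → ↥(Lp ℝ 1 μ), (∀ n, f n ∈ S) →
      ∃ G : ↥(Lp ℝ 1 μ), ∃ s : ℕ → ℕ, StrictMono s ∧ Tendsto (f ∘ s) atTop (𝓝 G) := by
    intro f hf
    choose φn hφint hφnn hfeq using hf
    set u : ℕ → ℝ → ℝ := fun n σ => 1 - Real.exp (-(φn n σ / N σ)) with hudef
    have hu : ∀ n, ∀ᵐ σ ∂μ, 0 ≤ u n σ ∧ u n σ ≤ 1 := by
      intro n
      filter_upwards [hNpos, hφnn n] with σ h1 h2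
      have ht : 0 ≤ φn n σ / N σ := div_nonneg h2 h1.le
      have he1 : Real.exp (-(φn n σ / N σ)) ≤ 1 := by rw [Real.exp_le_one_iff]; linarith
      have he0 : 0 < Real.exp (-(φn n σ / N σ)) := Real.exp_pos _
      constructor <;> simp only [hudef] <;> linarith
    have huaesm : ∀ n, AEStronglyMeasurable (u n) μ := fun n =>
      (measurable_const.aemeasurable.sub
        (Real.continuous_exp.measurable.comp_aemeasurable
          (((hφint n).aemeasurable.div hNmeas.aemeasurable).neg))).aestronglyMeasurable
    have huh_int : ∀ n (h : ↥(Lp ℝ 1 μ)), Integrable (fun σ => u n σ * (h : ℝ → ℝ) σ) μ := by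
      intro n h
      refine Integrable.mono' (L1.integrable_coeFn h).norm
        ((huaesm n).mul (L1.integrable_coeFn h).aestronglyMeasurable) ?_
      filter_upwards [hu n] with σ huσ
      rw [norm_mul]
      calc ‖u n σ‖ * ‖(h : ℝ → ℝ) σ‖ ≤ 1 * ‖(h : ℝ → ℝ) σ‖ := by
            refine mul_le_mul_of_nonneg_right ?_ (norm_nonneg _)
            rw [Real.norm_eq_abs, abs_of_nonneg huσ.1]; exact huσ.2
        _ = ‖(h : ℝ → ℝ) σ‖ := one_mul _
    have hpair : ∀ n (h : ↥(Lp ℝ 1 μ)), |∫ σ, u n σ * (h : ℝ → ℝ) σ ∂μ| ≤ ‖h‖ := by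
      intro n h
      rw [L1.norm_eq_integral_norm (μ := μ) h, ← Real.norm_eq_abs]
      refine norm_integral_le_of_norm_le (L1.integrable_coeFn h).norm ?_
      filter_upwards [hu n] with σ huσ
      rw [norm_mul]
      calc ‖u n σ‖ * ‖(h : ℝ → ℝ) σ‖ ≤ 1 * ‖(h : ℝ → ℝ) σ‖ := by
            refine mul_le_mul_of_nonneg_right ?_ (norm_nonneg _)
            rw [Real.norm_eq_abs, abs_of_nonneg huσ.1]; exact huσ.2
        _ = ‖(h : ℝ → ℝ) σ‖ := one_mul _
    have hpairdiff : ∀ n (h h' : ↥(Lp ℝ 1 μ)),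
        |(∫ σ, u n σ * (h : ℝ → ℝ) σ ∂μ) - ∫ σ, u n σ * (h' : ℝ → ℝ) σ ∂μ| ≤ dist h h' := by
      intro n h h'
      rw [← integral_sub (huh_int n h) (huh_int n h')]
      have hdd : dist h h' = ∫ σ, ‖(h : ℝ → ℝ) σ - (h' : ℝ → ℝ) σ‖ ∂μ := by
        rw [dist_eq_norm, L1.norm_eq_integral_norm (μ := μ) (h - h')]
        refine integral_congr_ae ?_
        filter_upwards [Lp.coeFn_sub h h'] with σ hσ
        rw [hσ, Pi.sub_apply]
      rw [hdd, ← Real.norm_eq_abs]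
      refine norm_integral_le_of_norm_le
        (((L1.integrable_coeFn h).sub (L1.integrable_coeFn h')).norm) ?_
      filter_upwards [hu n] with σ huσ
      have hre : u n σ * (h : ℝ → ℝ) σ - u n σ * (h' : ℝ → ℝ) σ
          = u n σ * ((h : ℝ → ℝ) σ - (h' : ℝ → ℝ) σ) := by ring
      rw [hre, norm_mul]
      calc ‖u n σ‖ * ‖(h : ℝ → ℝ) σ - (h' : ℝ → ℝ) σ‖
          ≤ 1 * ‖(h : ℝ → ℝ) σ - (h' : ℝ → ℝ) σ‖ := by
            refine mul_le_mul_of_nonneg_right ?_ (norm_nonneg _)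
            rw [Real.norm_eq_abs, abs_of_nonneg huσ.1]; exact huσ.2
        _ = ‖(h : ℝ → ℝ) σ - (h' : ℝ → ℝ) σ‖ := one_mul _
    -- separability and diagonal extraction
    haveI : Nonempty ↥(Lp ℝ 1 μ) := ⟨0⟩
    obtain ⟨D, hDc, hDd⟩ := TopologicalSpace.exists_countable_dense ↥(Lp ℝ 1 μ)
    obtain ⟨e, hDe⟩ := hDc.exists_eq_range hDd.nonempty
    set P : ℕ → ℕ → ℝ := fun n j => ∫ σ, u n σ * ((e j : ℝ → ℝ)) σ ∂μ with hPdef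
    have hPK : ∀ n, P n ∈ univ.pi (fun j => Icc (-‖e j‖) ‖e j‖) := by
      intro n j _
      exact Set.mem_Icc.mpr (abs_le.mp (hpair n (e j)))
    obtain ⟨ℓ, -, s, hsm, hconv⟩ :=
      (isCompact_univ_pi (fun j => isCompact_Icc)).isSeqCompact hPK
    rw [tendsto_pi_nhds] at hconv
    have hCau : ∀ h : ↥(Lp ℝ 1 μ), CauchySeq (fun k => ∫ σ, u (s k) σ * (h : ℝ → ℝ) σ ∂μ) := by
      intro h
      rw [Metric.cauchySeq_iff]
      intro ε hε
      obtain ⟨d, hdD, hdist⟩ := hDd.exists_dist_lt h (show (0:ℝ) < ε/3 by linarith)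
      obtain ⟨j, rfl⟩ : ∃ j, e j = d := by rw [hDe] at hdD; exact hdD
      have hc := (hconv j).cauchySeq
      rw [Metric.cauchySeq_iff] at hc
      obtain ⟨M, hM⟩ := hc (ε/3) (by linarith)
      refine ⟨M, fun m hm k hk => ?_⟩
      have h1 := hpairdiff (s m) h (e j)
      have h2 := hpairdiff (s k) h (e j)
      have h3 := hM m hm k hk
      rw [Real.dist_eq] at h3 ⊢
      have e1 : (∫ σ, u (s m) σ * (h : ℝ → ℝ) σ ∂μ) - ∫ σ, u (s k) σ * (h : ℝ → ℝ) σ ∂μ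
        = ((∫ σ, u (s m) σ * (h : ℝ → ℝ) σ ∂μ) - P (s m) j) + (P (s m) j - P (s k) j)
          + (P (s k) j - ∫ σ, u (s k) σ * (h : ℝ → ℝ) σ ∂μ) := by ring
      have habs := (congrArg abs e1).trans_le (abs_add_three _ _ _)
      have hA1 : |(∫ σ, u (s m) σ * (h : ℝ → ℝ) σ ∂μ) - P (s m) j| < ε/3 := lt_of_le_of_lt h1 hdist
      have hA3 : |P (s k) j - ∫ σ, u (s k) σ * (h : ℝ → ℝ) σ ∂μ| < ε/3 := by
        rw [abs_sub_comm]; exact lt_of_le_of_lt h2 hdist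
      have hA2 : |P (s m) j - P (s k) j| < ε/3 := by
        have := hM m hm k hk; rw [Real.dist_eq] at this
        simpa using this
      calc |(∫ σ, u (s m) σ * (h : ℝ → ℝ) σ ∂μ) - ∫ σ, u (s k) σ * (h : ℝ → ℝ) σ ∂μ|
          ≤ _ + _ + _ := habs
        _ < ε/3 + ε/3 + ε/3 := by exact add_lt_add (add_lt_add hA1 hA2) hA3
        _ = ε := by ring
    -- the kernel functions
    have hker_meas : ∀ x : ℝ, Measurable (fun σ => Θ x σ * N σ) := by
      intro x
      have h1 : Measurable (fun σ => Θ x σ) :=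
        hθSM.measurable.comp (measurable_const.prodMk measurable_id)
      exact h1.mul hNmeas
    have hker_int : ∀ x ∈ Ici (0:ℝ), Integrable (fun σ => Θ x σ * N σ) μ := by
      intro x hx
      refine Integrable.mono' (hcN.const_mul (α * L * a x))
        (hker_meas x).aestronglyMeasurable ?_
      rw [ae_restrict_iff' measurableSet_Ici]
      refine ae_of_all _ fun σ hσ => ?_
      rw [Real.norm_eq_abs, abs_of_nonneg (mul_nonneg (hθnn x σ) (hNnn σ))]
      calc Θ x σ * N σ ≤ (α * L * a x * c σ) * N σ :=
            mul_le_mul_of_nonneg_right (hθle x hx σ hσ) (hNnn σ)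
        _ = α * L * a x * (c σ * N σ) := by ring
    have hVex : ∀ x ∈ Ici (0:ℝ),
        ∃ l, Tendsto (fun k => ∫ σ, u (s k) σ * (Θ x σ * N σ) ∂μ) atTop (𝓝 l) := by
      intro x hx
      have hmem : MemLp (fun σ => Θ x σ * N σ) 1 μ := memLp_one_iff_integrable.2 (hker_int x hx)
      obtain ⟨l, hl⟩ := cauchySeq_tendsto_of_complete (hCau (hmem.toLp _))
      refine ⟨l, ?_⟩
      have heq : (fun k => ∫ σ, u (s k) σ * ((hmem.toLp _ : ℝ → ℝ)) σ ∂μ)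
          = fun k => ∫ σ, u (s k) σ * (Θ x σ * N σ) ∂μ := by
        funext k
        refine integral_congr_ae ?_
        filter_upwards [hmem.coeFn_toLp] with σ hσ
        rw [hσ]
      rwa [heq] at hl
    set V : ℝ → ℝ := fun x => limUnder atTop (fun k => ∫ σ, u (s k) σ * (Θ x σ * N σ) ∂μ)
      with hVdef
    have hVconv : ∀ x ∈ Ici (0:ℝ),
        Tendsto (fun k => ∫ σ, u (s k) σ * (Θ x σ * N σ) ∂μ) atTop (𝓝 (V x)) := by
      intro x hx
      obtain ⟨l, hl⟩ := hVex x hx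
      have : V x = l := hl.limUnder_eq
      rw [this]; exact hl
    have hΦv : ∀ n x, PhiOpHalfLine A N (φn n) x = N x * ∫ σ, u n σ * (Θ x σ * N σ) ∂μ := by
      intro n x
      unfold PhiOpHalfLine
      congr 1
      refine integral_congr_ae (ae_of_all _ fun σ => ?_)
      simp only [hudef, hΘdef]
      ring
    set W : ℝ → ℝ := fun x => N x * V x with hWdef
    have hWtend : ∀ᵐ x ∂μ,
        Tendsto (fun k => PhiOpHalfLine A N (φn (s k)) x) atTop (𝓝 (W x)) := by
      filter_upwards [ae_restrict_mem measurableSet_Ici] with x hx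
      have h2 : (fun k => PhiOpHalfLine A N (φn (s k)) x)
          = fun k => N x * ∫ σ, u (s k) σ * (Θ x σ * N σ) ∂μ := funext fun k => hΦv (s k) x
      rw [h2]
      exact (hVconv x hx).const_mul (N x)
    have hWbd : ∀ x ∈ Ici (0:ℝ), |W x| ≤ α * L * Ic * (a x * N x) := by
      intro x hx
      have ht : Tendsto (fun k => |PhiOpHalfLine A N (φn (s k)) x|) atTop (𝓝 |W x|) := by
        have h2 : (fun k => PhiOpHalfLine A N (φn (s k)) x)
            = fun k => N x * ∫ σ, u (s k) σ * (Θ x σ * N σ) ∂μ := funext fun k => hΦv (s k) x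
        have h3 := (hVconv x hx).const_mul (N x)
        rw [← h2] at h3
        exact h3.abs
      exact le_of_tendsto ht
        (Eventually.of_forall fun k => hkbd (φn (s k)) (hφint _) (hφnn _) x hx)
    have hWaesm : AEStronglyMeasurable W μ :=
      aestronglyMeasurable_of_tendsto_ae atTop (fun k => hkaesm _ (hφint _) (hφnn _)) hWtend
    have hWint : Integrable W μ := by
      refine Integrable.mono' (haN.const_mul (α * L * Ic)) hWaesm ?_
      rw [ae_restrict_iff' measurableSet_Ici]
      exact ae_of_all _ fun x hx => hWbd x hx
    set G := (memLp_one_iff_integrable.2 hWint).toLp W with hGdef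
    refine ⟨G, s, hsm, ?_⟩
    rw [tendsto_iff_dist_tendsto_zero]
    have hdist_eq : ∀ k, dist ((f ∘ s) k) G
        = ∫ x, ‖PhiOpHalfLine A N (φn (s k)) x - W x‖ ∂μ := by
      intro k
      rw [show (f ∘ s) k = f (s k) from rfl, dist_eq_norm,
        L1.norm_eq_integral_norm (μ := μ) (f (s k) - G)]
      refine integral_congr_ae ?_
      filter_upwards [Lp.coeFn_sub (f (s k)) G, hfeq (s k),
        (memLp_one_iff_integrable.2 hWint).coeFn_toLp] with x h1 h2 h3
      rw [h1, Pi.sub_apply, h2, h3]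
    have hzero : Tendsto (fun k => ∫ x, ‖PhiOpHalfLine A N (φn (s k)) x - W x‖ ∂μ)
        atTop (𝓝 0) := by
      have h0 : (0:ℝ) = ∫ _x, (0:ℝ) ∂μ := by simp
      rw [h0]
      refine tendsto_integral_of_dominated_convergence
        (fun x => α * L * Ic * (a x * N x) + α * L * Ic * (a x * N x))
        (fun k => ((hkaesm _ (hφint _) (hφnn _)).sub hWaesm).norm)
        ((haN.const_mul (α * L * Ic)).add (haN.const_mul (α * L * Ic))) ?_ ?_
      · intro k
        rw [ae_restrict_iff' measurableSet_Ici]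
        refine ae_of_all _ fun x hx => ?_
        rw [norm_norm]
        have hb1 : |PhiOpHalfLine A N (φn (s k)) x| ≤ α * L * Ic * (a x * N x) :=
          hkbd (φn (s k)) (hφint _) (hφnn _) x hx
        calc ‖PhiOpHalfLine A N (φn (s k)) x - W x‖
            ≤ ‖PhiOpHalfLine A N (φn (s k)) x‖ + ‖W x‖ := norm_sub_le _ _
          _ ≤ α * L * Ic * (a x * N x) + α * L * Ic * (a x * N x) := by
              rw [Real.norm_eq_abs, Real.norm_eq_abs]
              exact add_le_add hb1 (hWbd x hx)
      · filter_upwards [hWtend] with x hx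
        have := (hx.sub (tendsto_const_nhds (x := W x) (f := atTop (α := ℕ)))).norm
        simpa using this
    have hfun : (fun k => dist ((f ∘ s) k) G)
        = fun k => ∫ x, ‖PhiOpHalfLine A N (φn (s k)) x - W x‖ ∂μ := funext hdist_eq
    rw [hfun]
    exact hzero
  -- closure is sequentially compact
  have hclosure : IsSeqCompact (closure S) := by
    intro y hy
    have hpick : ∀ n : ℕ, ∃ z ∈ S, dist (y n) z < 1/((n:ℝ)+1) := fun n =>
      Metric.mem_closure_iff.1 (hy n) _ (by positivity)
    choose fz hfzS hfzd using hpick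
    obtain ⟨G, s, hsm, hG⟩ := hext fz hfzS
    refine ⟨G, mem_closure_of_tendsto hG (Eventually.of_forall fun k => hfzS (s k)),
      s, hsm, ?_⟩
    rw [tendsto_iff_dist_tendsto_zero]
    have hb : ∀ k, dist (y (s k)) G ≤ 1/((s k:ℝ)+1) + dist (fz (s k)) G := fun k =>
      (dist_triangle (y (s k)) (fz (s k)) G).trans
        (add_le_add (le_of_lt (hfzd (s k))) le_rfl)
    refine squeeze_zero (fun k => dist_nonneg) hb ?_
    have h1 : Tendsto (fun k => 1/((s k:ℝ)+1)) atTop (𝓝 0) := by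
      refine squeeze_zero (fun k => by positivity) (fun k => ?_) tendsto_one_div_add_atTop_nhds_zero_nat
      have hk : (k:ℝ) ≤ (s k : ℝ) := by exact_mod_cast hsm.le_apply
      apply one_div_le_one_div_of_le <;> [positivity; linarith]
    have h2 : Tendsto (fun k => dist (fz (s k)) G) atTop (𝓝 0) :=
      tendsto_iff_dist_tendsto_zero.1 hG
    simpa using h1.add h2
  exact hclosure.isCompact
end

section
/- Under Assumptions 1(1) and 2, the operator Φ has at most one nonzero fixed point in L¹₊(Ω): if φ₁, φ₂ ∈ L¹(Ω) are nonnegative, nonzero, and satisfy φᵢ(x) = N(x)∫_Ω Θ(x,σ)N(σ)(1 − e^{−φᵢ(σ)/N(σ)}) dσ for a.e. x (i = 1,2), then φ₁ = φ₂ a.e. -/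
set_option maxHeartbeats 1600000


open MeasureTheory Set

private lemma exp_concave_le' (t u : ℝ) (ht0 : 0 ≤ t) (ht1 : t ≤ 1) :
    t * (1 - Real.exp (-u)) ≤ 1 - Real.exp (-(t * u)) := by
  have h : Real.exp (t • (-u) + (1 - t) • (0:ℝ)) ≤ t • Real.exp (-u) + (1 - t) • Real.exp 0 :=
    convexOn_exp.2 (mem_univ (-u)) (mem_univ (0:ℝ)) ht0 (by linarith) (by ring)
  simp only [smul_eq_mul, mul_zero, add_zero, Real.exp_zero, mul_neg, mul_one] at h
  linarith

private lemma exp_concave_lt' (t u : ℝ) (ht0 : 0 < t) (ht1 : t < 1) (hu : 0 < u) :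
    t * (1 - Real.exp (-u)) < 1 - Real.exp (-(t * u)) := by
  have h : Real.exp (t • (-u) + (1 - t) • (0:ℝ)) < t • Real.exp (-u) + (1 - t) • Real.exp 0 :=
    strictConvexOn_exp.2 (mem_univ (-u)) (mem_univ (0:ℝ))
      (by simpa using hu.ne') ht0 (by linarith) (by ring)
  simp only [smul_eq_mul, mul_zero, add_zero, Real.exp_zero, mul_neg, mul_one] at h
  linarith

/-- `Θ(x,σ) = ∫_0^∞ A(τ,x,σ) dτ`. -/
noncomputable def Theta {n : ℕ} (A : ℝ → (Fin n → ℝ) → (Fin n → ℝ) → ℝ)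
    (x σ : Fin n → ℝ) : ℝ :=
  ∫ τ in Ici (0:ℝ), A τ x σ

private lemma phi_le_aux
    {n : ℕ} (Ω : Set (Fin n → ℝ)) (hΩ : MeasurableSet Ω)
    (N : (Fin n → ℝ) → ℝ) (hNmeas : Measurable N) (hNnn : ∀ x, 0 ≤ N x)
    (hNint : IntegrableOn N Ω)
    (hNpos : ∀ᵐ x ∂(volume.restrict Ω), 0 < N x)
    (A : ℝ → (Fin n → ℝ) → (Fin n → ℝ) → ℝ)
    (hAmeas : Measurable (fun p : ℝ × (Fin n → ℝ) × (Fin n → ℝ) => A p.1 p.2.1 p.2.2))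
    (hAnn : ∀ τ x σ, 0 ≤ A τ x σ)
    (α : ℝ) (hα : 1 < α)
    (a : (Fin n → ℝ) → ℝ) (b : ℝ → ℝ) (c : (Fin n → ℝ) → ℝ)
    (hameas : Measurable a) (hbmeas : Measurable b) (hcmeas : Measurable c)
    (hann : ∀ x, 0 ≤ a x) (hbnn : ∀ τ, 0 ≤ b τ) (hcnn : ∀ σ, 0 ≤ c σ)
    (haN : IntegrableOn (fun x => a x * N x) Ω)
    (hbint : IntegrableOn b (Ici 0))
    (hcN : IntegrableOn (fun x => c x * N x) Ω)
    (hAbound : ∀ τ ∈ Ici (0:ℝ), ∀ x ∈ Ω, ∀ σ ∈ Ω,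
      a x * b τ * c σ ≤ A τ x σ ∧ A τ x σ ≤ α * (a x * b τ * c σ))
    (haNpos : ∀ f : (Fin n → ℝ) → ℝ, Measurable f → (∀ x, 0 ≤ f x) →
      (∃ M, ∀ x, f x ≤ M) → ¬ f =ᵐ[volume.restrict Ω] 0 →
      0 < ∫ x in Ω, f x * (a x * N x))
    (hcpos : ∀ φ : (Fin n → ℝ) → ℝ, IntegrableOn φ Ω →
      (∀ᵐ x ∂(volume.restrict Ω), 0 ≤ φ x) → ¬ φ =ᵐ[volume.restrict Ω] 0 →
      0 < ∫ x in Ω, c x * φ x)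
    (φ₁ φ₂ : (Fin n → ℝ) → ℝ)
    (hφ₁int : IntegrableOn φ₁ Ω) (hφ₂int : IntegrableOn φ₂ Ω)
    (hφ₁nn : ∀ᵐ x ∂(volume.restrict Ω), 0 ≤ φ₁ x)
    (hφ₂nn : ∀ᵐ x ∂(volume.restrict Ω), 0 ≤ φ₂ x)
    (hφ₁ne : ¬ φ₁ =ᵐ[volume.restrict Ω] 0)
    (hφ₂ne : ¬ φ₂ =ᵐ[volume.restrict Ω] 0)
    (hfix₁ : ∀ᵐ x ∂(volume.restrict Ω),
      φ₁ x = N x * ∫ σ in Ω, Theta A x σ * N σ * (1 - Real.exp (-(φ₁ σ / N σ))))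
    (hfix₂ : ∀ᵐ x ∂(volume.restrict Ω),
      φ₂ x = N x * ∫ σ in Ω, Theta A x σ * N σ * (1 - Real.exp (-(φ₂ σ / N σ)))) :
    ∀ᵐ x ∂(volume.restrict Ω), φ₁ x ≤ φ₂ x := by
  classical
  set μ := volume.restrict Ω with hμdef
  have hαpos : (0:ℝ) < α := lt_trans one_pos hα
  have hmem : ∀ᵐ x ∂μ, x ∈ Ω := ae_restrict_mem hΩ
  -- measurability of Theta
  have hThetaM : Measurable fun p : (Fin n → ℝ) × (Fin n → ℝ) => Theta A p.1 p.2 := by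
    have h1 : StronglyMeasurable fun q : ((Fin n → ℝ) × (Fin n → ℝ)) × ℝ => A q.2 q.1.1 q.1.2 :=
      (hAmeas.comp (measurable_snd.prodMk
        (measurable_fst.fst.prodMk measurable_fst.snd))).stronglyMeasurable
    exact h1.integral_prod_right'.measurable
  have hThetaMx : ∀ x, Measurable fun σ => Theta A x σ :=
    fun x => hThetaM.comp measurable_prodMk_left
  have hThetann : ∀ x σ, 0 ≤ Theta A x σ :=
    fun x σ => integral_nonneg fun τ => hAnn τ x σ
  set L : ℝ := ∫ τ in Ici (0:ℝ), b τ with hLdef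
  have hL0 : 0 ≤ L := integral_nonneg fun τ => hbnn τ
  have hAmτ : ∀ x σ, Measurable fun τ => A τ x σ := by
    intro x σ
    exact hAmeas.comp (measurable_id.prodMk (measurable_const : Measurable fun _ : ℝ => (x, σ)))
  have hTheta_bounds : ∀ x ∈ Ω, ∀ σ ∈ Ω,
      a x * c σ * L ≤ Theta A x σ ∧ Theta A x σ ≤ α * (a x * c σ) * L := by
    intro x hx σ hσ
    have hup : IntegrableOn (fun τ => α * (a x * c σ) * b τ) (Ici 0) := hbint.const_mul _
    have hAi : IntegrableOn (fun τ => A τ x σ) (Ici 0) := by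
      refine hup.mono' (hAmτ x σ).aestronglyMeasurable ?_
      filter_upwards [ae_restrict_mem measurableSet_Ici] with τ hτ
      rw [Real.norm_of_nonneg (hAnn τ x σ)]
      have h2 := (hAbound τ hτ x hx σ hσ).2
      have he : α * (a x * c σ) * b τ = α * (a x * b τ * c σ) := by ring
      linarith
    have hlow : IntegrableOn (fun τ => a x * c σ * b τ) (Ici 0) := hbint.const_mul _
    constructor
    · have h := setIntegral_mono_on hlow hAi measurableSet_Ici (fun τ hτ => by
        have h1 := (hAbound τ hτ x hx σ hσ).1
        have he : a x * c σ * b τ = a x * b τ * c σ := by ring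
        linarith)
      calc a x * c σ * L = ∫ τ in Ici (0:ℝ), a x * c σ * b τ := by rw [integral_const_mul]
        _ ≤ Theta A x σ := h
    · have h := setIntegral_mono_on hAi hup measurableSet_Ici (fun τ hτ => by
        have h2 := (hAbound τ hτ x hx σ hσ).2
        have he : α * (a x * c σ) * b τ = α * (a x * b τ * c σ) := by ring
        linarith)
      calc Theta A x σ ≤ ∫ τ in Ici (0:ℝ), α * (a x * c σ) * b τ := h
        _ = α * (a x * c σ) * L := by rw [integral_const_mul]
  -- generic integrability and bounds machinery
  have hmain : ∀ G : (Fin n → ℝ) → ℝ, AEMeasurable G μ →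
      (∀ᵐ σ ∂μ, 0 ≤ G σ ∧ G σ ≤ 2 * N σ) →
      Integrable (fun σ => c σ * G σ) μ ∧
      (∀ x, x ∈ Ω → Integrable (fun σ => Theta A x σ * G σ) μ ∧
        a x * L * ∫ σ, c σ * G σ ∂μ ≤ ∫ σ, Theta A x σ * G σ ∂μ ∧
        ∫ σ, Theta A x σ * G σ ∂μ ≤ α * a x * L * ∫ σ, c σ * G σ ∂μ) := by
    intro G hGm hGb
    have hcG : Integrable (fun σ => c σ * G σ) μ := by
      refine (hcN.const_mul 2).mono' (hcmeas.aemeasurable.mul hGm).aestronglyMeasurable ?_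
      filter_upwards [hGb] with σ hσ
      rw [Real.norm_of_nonneg (mul_nonneg (hcnn σ) hσ.1)]
      calc c σ * G σ ≤ c σ * (2 * N σ) := mul_le_mul_of_nonneg_left hσ.2 (hcnn σ)
        _ = 2 * (c σ * N σ) := by ring
    refine ⟨hcG, fun x hx => ?_⟩
    have hΘG : Integrable (fun σ => Theta A x σ * G σ) μ := by
      refine (hcN.const_mul (2 * (α * a x * L))).mono'
        ((hThetaMx x).aemeasurable.mul hGm).aestronglyMeasurable ?_
      filter_upwards [hGb, hmem] with σ hσ hσΩ
      rw [Real.norm_of_nonneg (mul_nonneg (hThetann x σ) hσ.1)]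
      have hb2 := (hTheta_bounds x hx σ hσΩ).2
      have h1 : Theta A x σ * G σ ≤ (α * (a x * c σ) * L) * G σ :=
        mul_le_mul_of_nonneg_right hb2 hσ.1
      have h2 : (α * (a x * c σ) * L) * G σ ≤ (α * (a x * c σ) * L) * (2 * N σ) :=
        mul_le_mul_of_nonneg_left hσ.2
          (mul_nonneg (mul_nonneg hαpos.le (mul_nonneg (hann x) (hcnn σ))) hL0)
      calc Theta A x σ * G σ ≤ (α * (a x * c σ) * L) * (2 * N σ) := le_trans h1 h2
        _ = 2 * (α * a x * L) * (c σ * N σ) := by ring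
    refine ⟨hΘG, ?_, ?_⟩
    · have h : ∫ σ, a x * L * (c σ * G σ) ∂μ ≤ ∫ σ, Theta A x σ * G σ ∂μ := by
        refine integral_mono_ae (hcG.const_mul (a x * L)) hΘG ?_
        filter_upwards [hGb, hmem] with σ hσ hσΩ
        have hb1 := (hTheta_bounds x hx σ hσΩ).1
        have he : a x * L * (c σ * G σ) = (a x * c σ * L) * G σ := by ring
        rw [he]
        exact mul_le_mul_of_nonneg_right hb1 hσ.1
      calc a x * L * ∫ σ, c σ * G σ ∂μ = ∫ σ, a x * L * (c σ * G σ) ∂μ :=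
            (integral_const_mul _ _).symm
        _ ≤ ∫ σ, Theta A x σ * G σ ∂μ := h
    · have h : ∫ σ, Theta A x σ * G σ ∂μ ≤ ∫ σ, α * a x * L * (c σ * G σ) ∂μ := by
        refine integral_mono_ae hΘG (hcG.const_mul (α * a x * L)) ?_
        filter_upwards [hGb, hmem] with σ hσ hσΩ
        have hb2 := (hTheta_bounds x hx σ hσΩ).2
        have he : α * a x * L * (c σ * G σ) = (α * (a x * c σ) * L) * G σ := by ring
        rw [he]
        exact mul_le_mul_of_nonneg_right hb2 hσ.1
      calc ∫ σ, Theta A x σ * G σ ∂μ ≤ ∫ σ, α * a x * L * (c σ * G σ) ∂μ := h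
        _ = α * a x * L * ∫ σ, c σ * G σ ∂μ := integral_const_mul _ _
  have hφ₁m : AEMeasurable φ₁ μ := hφ₁int.aemeasurable
  have hφ₂m : AEMeasurable φ₂ μ := hφ₂int.aemeasurable
  -- measurability and bounds of the nonlinearity
  have hGmeas1 : ∀ ψ : (Fin n → ℝ) → ℝ, AEMeasurable ψ μ →
      AEMeasurable (fun σ => N σ * (1 - Real.exp (-(ψ σ / N σ)))) μ := fun ψ hψ =>
    hNmeas.aemeasurable.mul (aemeasurable_const.sub (Real.measurable_exp.comp_aemeasurable (hψ.div hNmeas.aemeasurable).neg))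
  have hGbnd : ∀ ψ : (Fin n → ℝ) → ℝ, (∀ᵐ x ∂μ, 0 ≤ ψ x) →
      ∀ᵐ σ ∂μ, 0 ≤ N σ * (1 - Real.exp (-(ψ σ / N σ))) ∧
        N σ * (1 - Real.exp (-(ψ σ / N σ))) ≤ 2 * N σ := by
    intro ψ hψ
    filter_upwards [hψ, hNpos] with σ h0 hN
    have hu : 0 ≤ ψ σ / N σ := div_nonneg h0 hN.le
    have he1 : Real.exp (-(ψ σ / N σ)) ≤ 1 := by
      rw [← Real.exp_zero]; exact Real.exp_le_exp.2 (by linarith)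
    have he2 : 0 < Real.exp (-(ψ σ / N σ)) := Real.exp_pos _
    exact ⟨mul_nonneg hN.le (by linarith), by nlinarith⟩
  -- fixed point bounds
  have hbounds : ∀ ψ : (Fin n → ℝ) → ℝ, IntegrableOn ψ Ω → (∀ᵐ x ∂μ, 0 ≤ ψ x) →
      (¬ ψ =ᵐ[μ] 0) →
      (∀ᵐ x ∂μ, ψ x = N x * ∫ σ, Theta A x σ * N σ * (1 - Real.exp (-(ψ σ / N σ))) ∂μ) →
      0 < ∫ σ, c σ * (N σ * (1 - Real.exp (-(ψ σ / N σ)))) ∂μ ∧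
      (∀ᵐ x ∂μ,
        N x * a x * (L * ∫ σ, c σ * (N σ * (1 - Real.exp (-(ψ σ / N σ)))) ∂μ) ≤ ψ x ∧
        ψ x ≤ N x * a x * (α * (L * ∫ σ, c σ * (N σ * (1 - Real.exp (-(ψ σ / N σ)))) ∂μ))) := by
    intro ψ hint hnn hne hfix
    have hGm := hGmeas1 ψ hint.aemeasurable
    have hGb := hGbnd ψ hnn
    obtain ⟨hcG, hx⟩ := hmain _ hGm hGb
    have hGint : Integrable (fun σ => N σ * (1 - Real.exp (-(ψ σ / N σ)))) μ := by
      refine (hNint.const_mul 2).mono' hGm.aestronglyMeasurable ?_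
      filter_upwards [hGb] with σ h
      rw [Real.norm_of_nonneg h.1]; exact h.2
    have hGne : ¬ (fun σ => N σ * (1 - Real.exp (-(ψ σ / N σ)))) =ᵐ[μ] 0 := by
      intro h; apply hne
      filter_upwards [h, hNpos, hnn] with σ h0 hN hψ0
      simp only [Pi.zero_apply] at h0 ⊢
      have h1 : 1 - Real.exp (-(ψ σ / N σ)) = 0 := by
        rcases mul_eq_zero.1 h0 with h' | h'
        · exact absurd h' hN.ne'
        · exact h'
      have he : Real.exp (-(ψ σ / N σ)) = 1 := by linarith
      have hu : -(ψ σ / N σ) = 0 := (Real.exp_eq_one_iff _).1 he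
      have hu' : ψ σ / N σ = 0 := by linarith
      rcases div_eq_zero_iff.1 hu' with h' | h'
      · exact h'
      · exact absurd h' hN.ne'
    have hIpos : 0 < ∫ σ, c σ * (N σ * (1 - Real.exp (-(ψ σ / N σ)))) ∂μ :=
      hcpos _ hGint (hGb.mono fun σ h => h.1) hGne
    refine ⟨hIpos, ?_⟩
    filter_upwards [hfix, hmem, hNpos] with x hfx hxΩ hNx
    obtain ⟨hΘG, hlb, hub⟩ := hx x hxΩ
    have hcongr : (∫ σ, Theta A x σ * N σ * (1 - Real.exp (-(ψ σ / N σ))) ∂μ)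
        = ∫ σ, Theta A x σ * (N σ * (1 - Real.exp (-(ψ σ / N σ)))) ∂μ := by
      apply integral_congr_ae
      filter_upwards with σ
      ring
    rw [hcongr] at hfx
    constructor
    · calc N x * a x * (L * ∫ σ, c σ * (N σ * (1 - Real.exp (-(ψ σ / N σ)))) ∂μ)
          = N x * (a x * L * ∫ σ, c σ * (N σ * (1 - Real.exp (-(ψ σ / N σ)))) ∂μ) := by ring
        _ ≤ N x * ∫ σ, Theta A x σ * (N σ * (1 - Real.exp (-(ψ σ / N σ)))) ∂μ :=
            mul_le_mul_of_nonneg_left hlb hNx.le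
        _ = ψ x := hfx.symm
    · calc ψ x = N x * ∫ σ, Theta A x σ * (N σ * (1 - Real.exp (-(ψ σ / N σ)))) ∂μ := hfx
        _ ≤ N x * (α * a x * L * ∫ σ, c σ * (N σ * (1 - Real.exp (-(ψ σ / N σ)))) ∂μ) :=
            mul_le_mul_of_nonneg_left hub hNx.le
        _ = N x * a x * (α * (L * ∫ σ, c σ * (N σ * (1 - Real.exp (-(ψ σ / N σ)))) ∂μ)) := by ring
  obtain ⟨hI₁pos, hb₁⟩ := hbounds φ₁ hφ₁int hφ₁nn hφ₁ne hfix₁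
  obtain ⟨hI₂pos, hb₂⟩ := hbounds φ₂ hφ₂int hφ₂nn hφ₂ne hfix₂
  set I₁ := ∫ σ, c σ * (N σ * (1 - Real.exp (-(φ₁ σ / N σ)))) ∂μ with hI₁def
  set I₂ := ∫ σ, c σ * (N σ * (1 - Real.exp (-(φ₂ σ / N σ)))) ∂μ with hI₂def
  -- L > 0
  have hLpos : 0 < L := by
    rcases hL0.lt_or_eq with h | h
    · exact h
    · exfalso
      apply hφ₁ne
      filter_upwards [hb₁, hφ₁nn] with x hx h0
      have h2 := hx.2
      rw [← h] at h2
      simp only [zero_mul, mul_zero, Pi.zero_apply] at h2 ⊢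
      linarith
  have hk₁ : 0 < L * I₁ := mul_pos hLpos hI₁pos
  have hk₂ : 0 < L * I₂ := mul_pos hLpos hI₂pos
  set S : Set ℝ := {t : ℝ | 0 ≤ t ∧ ∀ᵐ x ∂μ, t * φ₁ x ≤ φ₂ x} with hSdef
  have ht₀S : (L * I₂) / (α * (L * I₁)) ∈ S := by
    refine ⟨le_of_lt (div_pos hk₂ (mul_pos hαpos hk₁)), ?_⟩
    filter_upwards [hb₁, hb₂] with x h1 h2
    have h3 : (L * I₂) / (α * (L * I₁)) * φ₁ x
        ≤ (L * I₂) / (α * (L * I₁)) * (N x * a x * (α * (L * I₁))) :=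
      mul_le_mul_of_nonneg_left h1.2 (le_of_lt (div_pos hk₂ (mul_pos hαpos hk₁)))
    have hne : α * (L * I₁) ≠ 0 := (mul_pos hαpos hk₁).ne'
    have h4 : (L * I₂) / (α * (L * I₁)) * (N x * a x * (α * (L * I₁)))
        = N x * a x * (L * I₂) := by
      field_simp
    linarith [h2.1]
  -- ∫ aN > 0
  have hr : 0 < ∫ x, a x * N x ∂μ := by
    have h1 := haNpos (fun _ => 1) measurable_const (fun _ => zero_le_one)
      ⟨1, fun _ => le_rfl⟩ ?_
    · simpa using h1
    · intro h
      apply hφ₁ne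
      have h3 : ∀ᵐ x ∂μ, False := by
        filter_upwards [h] with x hx
        simpa using hx
      have h2 : μ Set.univ = 0 := by simpa [ae_iff] using h3
      exact ae_iff.2 (measure_mono_null (Set.subset_univ _) h2)
  have hbddS : BddAbove S := by
    refine ⟨α * (L * I₂) / (L * I₁), ?_⟩
    rintro t ⟨ht0, ht⟩
    have key : ∀ᵐ x ∂μ, (t * (L * I₁)) * (a x * N x) ≤ (α * (L * I₂)) * (a x * N x) := by
      filter_upwards [ht, hb₁, hb₂] with x h1 h2 h3
      have e1 : (t * (L * I₁)) * (a x * N x) = t * (N x * a x * (L * I₁)) := by ring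
      have e2 : (α * (L * I₂)) * (a x * N x) = N x * a x * (α * (L * I₂)) := by ring
      have h4 : t * (N x * a x * (L * I₁)) ≤ t * φ₁ x := mul_le_mul_of_nonneg_left h2.1 ht0
      rw [e1, e2]
      linarith [h3.2]
    have h5 := integral_mono_ae (haN.const_mul _) (haN.const_mul _) key
    rw [integral_const_mul, integral_const_mul] at h5
    have h6 : t * (L * I₁) ≤ α * (L * I₂) := le_of_mul_le_mul_right (by linarith) hr
    exact (le_div_iff₀ hk₁).2 h6
  have hSne : S.Nonempty := ⟨_, ht₀S⟩
  set t' := sSup S with ht'def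
  have ht'ge : (L * I₂) / (α * (L * I₁)) ≤ t' := le_csSup hbddS ht₀S
  have ht'pos : 0 < t' := lt_of_lt_of_le (div_pos hk₂ (mul_pos hαpos hk₁)) ht'ge
  have ht'le : ∀ᵐ x ∂μ, t' * φ₁ x ≤ φ₂ x := by
    have hseq : ∀ m : ℕ, ∃ s, s ∈ S ∧ t' - 1/((m:ℝ)+1) < s := by
      intro m
      have hlt : t' - 1/((m:ℝ)+1) < t' := by
        have : (0:ℝ) < 1/((m:ℝ)+1) := by positivity
        linarith
      obtain ⟨s, hs, hlt'⟩ := exists_lt_of_lt_csSup hSne hlt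
      exact ⟨s, hs, hlt'⟩
    choose ts htsS htslt using hseq
    have hall : ∀ᵐ x ∂μ, ∀ m : ℕ, ts m * φ₁ x ≤ φ₂ x := ae_all_iff.2 fun m => (htsS m).2
    filter_upwards [hall, hφ₁nn] with x hx h0
    have hm : ∀ m : ℕ, (t' - 1/((m:ℝ)+1)) * φ₁ x ≤ φ₂ x := fun m =>
      le_trans (mul_le_mul_of_nonneg_right (htslt m).le h0) (hx m)
    have htend : Filter.Tendsto (fun m : ℕ => (t' - 1/((m:ℝ)+1)) * φ₁ x)
        Filter.atTop (nhds (t' * φ₁ x)) := by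
      have h1 := tendsto_one_div_add_atTop_nhds_zero_nat (𝕜 := ℝ)
      have h2 : Filter.Tendsto (fun m : ℕ => t' - 1/((m:ℝ)+1)) Filter.atTop (nhds (t' - 0)) :=
        Filter.Tendsto.const_sub _ h1
      rw [sub_zero] at h2
      exact h2.mul_const (φ₁ x)
    exact le_of_tendsto' htend hm
  -- main claim : 1 ≤ t'
  have h1t : 1 ≤ t' := by
    by_contra hcon
    push_neg at hcon
    have hgm : AEMeasurable (fun σ =>
        N σ * ((1 - Real.exp (-(t' * (φ₁ σ / N σ)))) - t' * (1 - Real.exp (-(φ₁ σ / N σ))))) μ := by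
      have h1 : AEMeasurable (fun σ => φ₁ σ / N σ) μ := hφ₁m.div hNmeas.aemeasurable
      exact hNmeas.aemeasurable.mul
        ((aemeasurable_const.sub (Real.measurable_exp.comp_aemeasurable (h1.const_mul t').neg)).sub
          ((aemeasurable_const.sub (Real.measurable_exp.comp_aemeasurable h1.neg)).const_mul t'))
    have hgb : ∀ᵐ σ ∂μ, 0 ≤ N σ * ((1 - Real.exp (-(t' * (φ₁ σ / N σ))))
          - t' * (1 - Real.exp (-(φ₁ σ / N σ)))) ∧
        N σ * ((1 - Real.exp (-(t' * (φ₁ σ / N σ))))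
          - t' * (1 - Real.exp (-(φ₁ σ / N σ)))) ≤ 2 * N σ := by
      filter_upwards [hφ₁nn, hNpos] with σ h0 hN
      have hu : 0 ≤ φ₁ σ / N σ := div_nonneg h0 hN.le
      have hcw := exp_concave_le' t' (φ₁ σ / N σ) ht'pos.le hcon.le
      have he1 : Real.exp (-(t' * (φ₁ σ / N σ))) ≤ 1 := by
        rw [← Real.exp_zero]
        exact Real.exp_le_exp.2 (by nlinarith)
      have he2 : Real.exp (-(φ₁ σ / N σ)) ≤ 1 := by
        rw [← Real.exp_zero]
        exact Real.exp_le_exp.2 (by linarith)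
      constructor
      · exact mul_nonneg hN.le (by linarith)
      · have h3 : (1 - Real.exp (-(t' * (φ₁ σ / N σ))))
            - t' * (1 - Real.exp (-(φ₁ σ / N σ))) ≤ 2 := by
          have := Real.exp_pos (-(t' * (φ₁ σ / N σ)))
          nlinarith
        nlinarith [hN.le]
    have hgne : ¬ (fun σ => N σ * ((1 - Real.exp (-(t' * (φ₁ σ / N σ))))
        - t' * (1 - Real.exp (-(φ₁ σ / N σ))))) =ᵐ[μ] 0 := by
      intro hg
      apply hφ₁ne
      filter_upwards [hg, hφ₁nn, hNpos] with σ h0 hnn hN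
      simp only [Pi.zero_apply] at h0 ⊢
      by_contra hne
      have hpos : 0 < φ₁ σ := lt_of_le_of_ne hnn (Ne.symm hne)
      have hu : 0 < φ₁ σ / N σ := div_pos hpos hN
      have hstrict := exp_concave_lt' t' (φ₁ σ / N σ) ht'pos hcon hu
      nlinarith
    have hgint : Integrable (fun σ => N σ * ((1 - Real.exp (-(t' * (φ₁ σ / N σ))))
        - t' * (1 - Real.exp (-(φ₁ σ / N σ))))) μ := by
      refine (hNint.const_mul 2).mono' hgm.aestronglyMeasurable ?_
      filter_upwards [hgb] with σ h
      rw [Real.norm_of_nonneg h.1]; exact h.2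
    have hJpos : 0 < ∫ σ, c σ * (N σ * ((1 - Real.exp (-(t' * (φ₁ σ / N σ))))
        - t' * (1 - Real.exp (-(φ₁ σ / N σ))))) ∂μ :=
      hcpos _ hgint (hgb.mono fun σ h => h.1) hgne
    set J := ∫ σ, c σ * (N σ * ((1 - Real.exp (-(t' * (φ₁ σ / N σ))))
        - t' * (1 - Real.exp (-(φ₁ σ / N σ))))) ∂μ with hJdef
    obtain ⟨hcg, hxg⟩ := hmain _ hgm hgb
    obtain ⟨hc1, hx1⟩ := hmain _ (hGmeas1 φ₁ hφ₁m) (hGbnd φ₁ hφ₁nn)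
    obtain ⟨hc2, hx2⟩ := hmain _ (hGmeas1 φ₂ hφ₂m) (hGbnd φ₂ hφ₂nn)
    -- G' = N (1 - exp(-(t' u₁)))
    have hG'm : AEMeasurable (fun σ => N σ * (1 - Real.exp (-(t' * (φ₁ σ / N σ))))) μ := by
      have h1 : AEMeasurable (fun σ => φ₁ σ / N σ) μ := hφ₁m.div hNmeas.aemeasurable
      exact hNmeas.aemeasurable.mul (aemeasurable_const.sub (Real.measurable_exp.comp_aemeasurable (h1.const_mul t').neg))
    have hG'b : ∀ᵐ σ ∂μ, 0 ≤ N σ * (1 - Real.exp (-(t' * (φ₁ σ / N σ)))) ∧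
        N σ * (1 - Real.exp (-(t' * (φ₁ σ / N σ)))) ≤ 2 * N σ := by
      filter_upwards [hφ₁nn, hNpos] with σ h0 hN
      have hu : 0 ≤ φ₁ σ / N σ := div_nonneg h0 hN.le
      have he1 : Real.exp (-(t' * (φ₁ σ / N σ))) ≤ 1 := by
        rw [← Real.exp_zero]
        exact Real.exp_le_exp.2 (by nlinarith [ht'pos.le])
      have he2 := Real.exp_pos (-(t' * (φ₁ σ / N σ)))
      exact ⟨mul_nonneg hN.le (by linarith), by nlinarith⟩
    obtain ⟨hc', hx'⟩ := hmain _ hG'm hG'b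
    set ε := (L * J) / (α * (L * I₁)) with hεdef
    have hεpos : 0 < ε := div_pos (mul_pos hLpos hJpos) (mul_pos hαpos hk₁)
    have hstep : (t' + ε) ∈ S := by
      refine ⟨by linarith, ?_⟩
      filter_upwards [hmem, hfix₁, hfix₂, hb₁, hNpos] with x hxΩ hf1 hf2 hb1x hNx
      obtain ⟨hi1, hl1, hu1⟩ := hx1 x hxΩ
      obtain ⟨hi2, hl2, hu2⟩ := hx2 x hxΩ
      obtain ⟨hi', hl', hu'⟩ := hx' x hxΩ
      obtain ⟨hig, hlg, hug⟩ := hxg x hxΩ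
      have hf1' : φ₁ x = N x * ∫ σ, Theta A x σ * (N σ * (1 - Real.exp (-(φ₁ σ / N σ)))) ∂μ := by
        rw [hf1]; congr 1
        apply integral_congr_ae; filter_upwards with σ; ring
      have hf2' : φ₂ x = N x * ∫ σ, Theta A x σ * (N σ * (1 - Real.exp (-(φ₂ σ / N σ)))) ∂μ := by
        rw [hf2]; congr 1
        apply integral_congr_ae; filter_upwards with σ; ring
      have hmono : ∫ σ, Theta A x σ * (N σ * (1 - Real.exp (-(t' * (φ₁ σ / N σ))))) ∂μ
          ≤ ∫ σ, Theta A x σ * (N σ * (1 - Real.exp (-(φ₂ σ / N σ)))) ∂μ := by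
        refine integral_mono_ae hi' hi2 ?_
        filter_upwards [ht'le, hNpos, hφ₁nn] with σ hts hNσ hφσ
        have hq : t' * (φ₁ σ / N σ) ≤ φ₂ σ / N σ := by
          rw [mul_div_assoc']
          exact (div_le_div_iff_of_pos_right hNσ).2 hts
        have hexp : Real.exp (-(φ₂ σ / N σ)) ≤ Real.exp (-(t' * (φ₁ σ / N σ))) :=
          Real.exp_le_exp.2 (by linarith)
        have hinner : N σ * (1 - Real.exp (-(t' * (φ₁ σ / N σ))))
            ≤ N σ * (1 - Real.exp (-(φ₂ σ / N σ))) :=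
          mul_le_mul_of_nonneg_left (by linarith) hNσ.le
        exact mul_le_mul_of_nonneg_left hinner (hThetann x σ)
      have hsplit : ∫ σ, Theta A x σ * (N σ * (1 - Real.exp (-(t' * (φ₁ σ / N σ))))) ∂μ
          = t' * (∫ σ, Theta A x σ * (N σ * (1 - Real.exp (-(φ₁ σ / N σ)))) ∂μ)
            + ∫ σ, Theta A x σ * (N σ * ((1 - Real.exp (-(t' * (φ₁ σ / N σ))))
              - t' * (1 - Real.exp (-(φ₁ σ / N σ))))) ∂μ := by
        have hpt : ∀ σ, Theta A x σ * (N σ * (1 - Real.exp (-(t' * (φ₁ σ / N σ)))))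
            = t' * (Theta A x σ * (N σ * (1 - Real.exp (-(φ₁ σ / N σ)))))
              + Theta A x σ * (N σ * ((1 - Real.exp (-(t' * (φ₁ σ / N σ))))
                - t' * (1 - Real.exp (-(φ₁ σ / N σ))))) := by
          intro σ; ring
        rw [integral_congr_ae (Filter.Eventually.of_forall hpt),
          integral_add (hi1.const_mul t') hig, integral_const_mul]
      have hA1 : N x * (t' * (∫ σ, Theta A x σ * (N σ * (1 - Real.exp (-(φ₁ σ / N σ)))) ∂μ)
            + ∫ σ, Theta A x σ * (N σ * ((1 - Real.exp (-(t' * (φ₁ σ / N σ))))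
              - t' * (1 - Real.exp (-(φ₁ σ / N σ))))) ∂μ) ≤ φ₂ x := by
        rw [hf2', ← hsplit]
        exact mul_le_mul_of_nonneg_left hmono hNx.le
      have hA3 : N x * (a x * L * J)
          ≤ N x * ∫ σ, Theta A x σ * (N σ * ((1 - Real.exp (-(t' * (φ₁ σ / N σ))))
            - t' * (1 - Real.exp (-(φ₁ σ / N σ))))) ∂μ :=
        mul_le_mul_of_nonneg_left hlg hNx.le
      have hA4 : t' * φ₁ x + N x * (a x * L * J) ≤ φ₂ x := by
        have hdist : N x * (t' * (∫ σ, Theta A x σ * (N σ * (1 - Real.exp (-(φ₁ σ / N σ)))) ∂μ)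
              + ∫ σ, Theta A x σ * (N σ * ((1 - Real.exp (-(t' * (φ₁ σ / N σ))))
                - t' * (1 - Real.exp (-(φ₁ σ / N σ))))) ∂μ)
            = t' * (N x * ∫ σ, Theta A x σ * (N σ * (1 - Real.exp (-(φ₁ σ / N σ)))) ∂μ)
              + N x * ∫ σ, Theta A x σ * (N σ * ((1 - Real.exp (-(t' * (φ₁ σ / N σ))))
                - t' * (1 - Real.exp (-(φ₁ σ / N σ))))) ∂μ := by ring
        rw [hdist] at hA1
        rw [← hf1'] at hA1
        linarith
      have hε2 : ε * φ₁ x ≤ N x * (a x * L * J) := by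
        have h5 : ε * φ₁ x ≤ ε * (N x * a x * (α * (L * I₁))) :=
          mul_le_mul_of_nonneg_left hb1x.2 hεpos.le
        have hne : α * (L * I₁) ≠ 0 := (mul_pos hαpos hk₁).ne'
        have h6 : ε * (N x * a x * (α * (L * I₁))) = N x * (a x * L * J) := by
          rw [hεdef]
          field_simp
        linarith
      have hfin : (t' + ε) * φ₁ x = t' * φ₁ x + ε * φ₁ x := by ring
      linarith
    have hle := le_csSup hbddS hstep
    rw [← ht'def] at hle
    linarith
  filter_upwards [ht'le, hφ₁nn] with x h1 h0
  calc φ₁ x = 1 * φ₁ x := (one_mul _).symm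
    _ ≤ t' * φ₁ x := mul_le_mul_of_nonneg_right h1t h0
    _ ≤ φ₂ x := h1

/-- under Assumptions 1(1) and 2, the operator
`(Φφ)(x) = N(x) ∫_Ω Θ(x,σ) N(σ)(1 - e^{-φ(σ)/N(σ)}) dσ` has at most one nonzero
fixed point in the positive cone of L¹(Ω). -/
theorem Phi_fixed_point_unique
    {n : ℕ} (Ω : Set (Fin n → ℝ)) (hΩ : MeasurableSet Ω)
    (N : (Fin n → ℝ) → ℝ) (hNmeas : Measurable N) (hNnn : ∀ x, 0 ≤ N x)
    (hNint : IntegrableOn N Ω)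
    (hNpos : ∀ᵐ x ∂(volume.restrict Ω), 0 < N x)
    (A : ℝ → (Fin n → ℝ) → (Fin n → ℝ) → ℝ)
    (hAmeas : Measurable (fun p : ℝ × (Fin n → ℝ) × (Fin n → ℝ) => A p.1 p.2.1 p.2.2))
    (hAnn : ∀ τ x σ, 0 ≤ A τ x σ)
    (α : ℝ) (hα : 1 < α)
    (a : (Fin n → ℝ) → ℝ) (b : ℝ → ℝ) (c : (Fin n → ℝ) → ℝ)
    (hameas : Measurable a) (hbmeas : Measurable b) (hcmeas : Measurable c)
    (hann : ∀ x, 0 ≤ a x) (hbnn : ∀ τ, 0 ≤ b τ) (hcnn : ∀ σ, 0 ≤ c σ)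
    (haN : IntegrableOn (fun x => a x * N x) Ω)
    (hbint : IntegrableOn b (Ici 0))
    (hcN : IntegrableOn (fun x => c x * N x) Ω)
    (hc2N : IntegrableOn (fun x => c x ^ 2 * N x) Ω)
    (hAbound : ∀ τ ∈ Ici (0:ℝ), ∀ x ∈ Ω, ∀ σ ∈ Ω,
      a x * b τ * c σ ≤ A τ x σ ∧ A τ x σ ≤ α * (a x * b τ * c σ))
    -- Assumption 2
    (haNpos : ∀ f : (Fin n → ℝ) → ℝ, Measurable f → (∀ x, 0 ≤ f x) →
      (∃ M, ∀ x, f x ≤ M) → ¬ f =ᵐ[volume.restrict Ω] 0 →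
      0 < ∫ x in Ω, f x * (a x * N x))
    (hcbdd : ∃ M, ∀ x, c x ≤ M)
    (hcpos : ∀ φ : (Fin n → ℝ) → ℝ, IntegrableOn φ Ω →
      (∀ᵐ x ∂(volume.restrict Ω), 0 ≤ φ x) → ¬ φ =ᵐ[volume.restrict Ω] 0 →
      0 < ∫ x in Ω, c x * φ x)
    -- two nonzero nonnegative fixed points of Φ
    (φ₁ φ₂ : (Fin n → ℝ) → ℝ)
    (hφ₁int : IntegrableOn φ₁ Ω) (hφ₂int : IntegrableOn φ₂ Ω)
    (hφ₁nn : ∀ᵐ x ∂(volume.restrict Ω), 0 ≤ φ₁ x)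
    (hφ₂nn : ∀ᵐ x ∂(volume.restrict Ω), 0 ≤ φ₂ x)
    (hφ₁ne : ¬ φ₁ =ᵐ[volume.restrict Ω] 0)
    (hφ₂ne : ¬ φ₂ =ᵐ[volume.restrict Ω] 0)
    (hfix₁ : ∀ᵐ x ∂(volume.restrict Ω),
      φ₁ x = N x * ∫ σ in Ω, Theta A x σ * N σ * (1 - Real.exp (-(φ₁ σ / N σ))))
    (hfix₂ : ∀ᵐ x ∂(volume.restrict Ω),
      φ₂ x = N x * ∫ σ in Ω, Theta A x σ * N σ * (1 - Real.exp (-(φ₂ σ / N σ)))) :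
    φ₁ =ᵐ[volume.restrict Ω] φ₂ := by
  have h12 := phi_le_aux Ω hΩ N hNmeas hNnn hNint hNpos A hAmeas hAnn α hα a b c
    hameas hbmeas hcmeas hann hbnn hcnn haN hbint hcN hAbound haNpos hcpos
    φ₁ φ₂ hφ₁int hφ₂int hφ₁nn hφ₂nn hφ₁ne hφ₂ne hfix₁ hfix₂
  have h21 := phi_le_aux Ω hΩ N hNmeas hNnn hNint hNpos A hAmeas hAnn α hα a b c
    hameas hbmeas hcmeas hann hbnn hcnn haN hbint hcN hAbound haNpos hcpos
    φ₂ φ₁ hφ₂int hφ₁int hφ₂nn hφ₁nn hφ₂ne hφ₁ne hfix₂ hfix₁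
  filter_upwards [h12, h21] with x hx1 hx2
  exact le_antisymm hx1 hx2
end

section
/- Under Assumptions 1(1) and 2, suppose V ∈ Y is a nonzero nonnegative fixed point of Ψ, i.e. V(x) = ∫_Ω Θ(x,σ)N(σ)(1 − e^{−V(σ)}) dσ a.e. Then for every H_∞ ∈ Y with H_∞ ≥ 0 a.e., every nonzero nonnegative W_∞ ∈ Y satisfying W_∞(x) = H_∞(x) + ∫_Ω Θ(x,σ)N(σ)(1 − e^{−W_∞(σ)}) dσ a.e. satisfies W_∞(x) ≥ V(x) for a.e. x. -/
open MeasureTheory Set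

/-- The nonlinear operator `(Ψψ)(x) = ∫_Ω Θ(x,σ) N(σ)(1 - e^{-ψ(σ)}) dσ`. -/
noncomputable def PsiOp {n : ℕ} (Ω : Set (Fin n → ℝ))
    (A : ℝ → (Fin n → ℝ) → (Fin n → ℝ) → ℝ) (N : (Fin n → ℝ) → ℝ)
    (ψ : (Fin n → ℝ) → ℝ) (x : Fin n → ℝ) : ℝ :=
  ∫ σ in Ω, Theta A x σ * N σ * (1 - Real.exp (-ψ σ))

private lemma exp_concave_ineq {l t : ℝ} (hl0 : 0 ≤ l) (hl1 : l ≤ 1) :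
    l * (1 - Real.exp (-t)) ≤ 1 - Real.exp (-(l * t)) := by
  have h := convexOn_exp.2 (mem_univ (-t)) (mem_univ (0:ℝ)) hl0 (by linarith)
    (by ring : l + (1 - l) = 1)
  simp only [smul_eq_mul, mul_zero, add_zero, Real.exp_zero, mul_one, mul_neg] at h
  have hex : l * (1 - Real.exp (-t)) = l - l * Real.exp (-t) := by ring
  linarith

private lemma exp_concave_ineq_strict {l t : ℝ} (hl0 : 0 < l) (hl1 : l < 1) (ht : 0 < t) :
    l * (1 - Real.exp (-t)) < 1 - Real.exp (-(l * t)) := by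
  have hne : (-t : ℝ) ≠ 0 := ne_of_lt (by linarith)
  have h := strictConvexOn_exp.2 (mem_univ (-t)) (mem_univ (0:ℝ)) hne hl0 (by linarith)
    (by ring : l + (1 - l) = 1)
  simp only [smul_eq_mul, mul_zero, add_zero, Real.exp_zero, mul_one, mul_neg] at h
  have hex : l * (1 - Real.exp (-t)) = l - l * Real.exp (-t) := by ring
  linarith

/-- if V is a nonzero nonnegative fixed point of Ψ in Y, then every nonzero
nonnegative solution W_∞ ∈ Y of W_∞ = H_∞ + Ψ(W_∞) with H_∞ ∈ Y₊ dominates V a.e. -/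
theorem final_size_dominates_fixed_point
    {n : ℕ} (Ω : Set (Fin n → ℝ)) (hΩ : MeasurableSet Ω)
    (N : (Fin n → ℝ) → ℝ) (hNmeas : Measurable N) (hNnn : ∀ x, 0 ≤ N x)
    (hNint : IntegrableOn N Ω)
    (hNpos : ∀ᵐ x ∂(volume.restrict Ω), 0 < N x)
    (A : ℝ → (Fin n → ℝ) → (Fin n → ℝ) → ℝ)
    (hAmeas : Measurable (fun p : ℝ × (Fin n → ℝ) × (Fin n → ℝ) => A p.1 p.2.1 p.2.2))
    (hAnn : ∀ τ x σ, 0 ≤ A τ x σ)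
    (α : ℝ) (hα : 1 < α)
    (a : (Fin n → ℝ) → ℝ) (b : ℝ → ℝ) (c : (Fin n → ℝ) → ℝ)
    (hameas : Measurable a) (hbmeas : Measurable b) (hcmeas : Measurable c)
    (hann : ∀ x, 0 ≤ a x) (hbnn : ∀ τ, 0 ≤ b τ) (hcnn : ∀ σ, 0 ≤ c σ)
    (haN : IntegrableOn (fun x => a x * N x) Ω)
    (hbint : IntegrableOn b (Ici 0))
    (hcN : IntegrableOn (fun x => c x * N x) Ω)
    (hc2N : IntegrableOn (fun x => c x ^ 2 * N x) Ω)
    (hAbound : ∀ τ ∈ Ici (0:ℝ), ∀ x ∈ Ω, ∀ σ ∈ Ω,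
      a x * b τ * c σ ≤ A τ x σ ∧ A τ x σ ≤ α * (a x * b τ * c σ))
    -- Assumption 2 (relevant part)
    (hcbdd : ∃ M, ∀ x, c x ≤ M)
    (hcpos : ∀ φ : (Fin n → ℝ) → ℝ, IntegrableOn φ Ω →
      (∀ᵐ x ∂(volume.restrict Ω), 0 ≤ φ x) → ¬ φ =ᵐ[volume.restrict Ω] 0 →
      0 < ∫ x in Ω, c x * φ x)
    -- V is a nonzero nonnegative fixed point of Ψ in Y
    (V : (Fin n → ℝ) → ℝ)
    (hVY : IntegrableOn (fun x => V x * N x) Ω)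
    (hVnn : ∀ᵐ x ∂(volume.restrict Ω), 0 ≤ V x)
    (hVne : ¬ V =ᵐ[volume.restrict Ω] 0)
    (hVfix : ∀ᵐ x ∂(volume.restrict Ω), V x = PsiOp Ω A N V x) :
    ∀ Hinf : (Fin n → ℝ) → ℝ, IntegrableOn (fun x => Hinf x * N x) Ω →
      (∀ᵐ x ∂(volume.restrict Ω), 0 ≤ Hinf x) →
      ∀ Winf : (Fin n → ℝ) → ℝ, IntegrableOn (fun x => Winf x * N x) Ω →
        (∀ᵐ x ∂(volume.restrict Ω), 0 ≤ Winf x) →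
        ¬ Winf =ᵐ[volume.restrict Ω] 0 →
        (∀ᵐ x ∂(volume.restrict Ω), Winf x = Hinf x + PsiOp Ω A N Winf x) →
        ∀ᵐ x ∂(volume.restrict Ω), V x ≤ Winf x := by
  intro Hinf hHY hHnn Winf hWY hWnn hWne hWeq
  have hα0 : (0:ℝ) < α := lt_trans one_pos hα
  set L : ℝ := ∫ τ in Ici (0:ℝ), b τ with hLdef
  -- Θ is nonnegative
  have hThetaNN : ∀ x σ, 0 ≤ Theta A x σ := fun x σ => integral_nonneg fun τ => hAnn τ x σ
  -- Θ is measurable in σ for fixed x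
  have hThetaMeas : ∀ x, Measurable fun σ => Theta A x σ := by
    intro x
    have h1 : StronglyMeasurable fun p : (Fin n → ℝ) × ℝ => A p.2 x p.1 :=
      (hAmeas.comp ((measurable_snd.prodMk (measurable_const.prodMk
        measurable_fst)))).stronglyMeasurable
    exact (MeasureTheory.StronglyMeasurable.integral_prod_right'
      (ν := volume.restrict (Ici (0:ℝ))) h1).measurable
  -- Θ bounds
  have hTheta : ∀ x ∈ Ω, ∀ σ ∈ Ω,
      a x * L * c σ ≤ Theta A x σ ∧ Theta A x σ ≤ α * (a x * L * c σ) := by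
    intro x hx σ hσ
    have hmA : Measurable fun τ => A τ x σ :=
      hAmeas.comp (measurable_id.prodMk (measurable_const.prodMk measurable_const))
    have hintA : IntegrableOn (fun τ => A τ x σ) (Ici 0) := by
      refine Integrable.mono' (hbint.const_mul (α * (a x * c σ))) hmA.aestronglyMeasurable ?_
      filter_upwards [ae_restrict_mem measurableSet_Ici] with τ hτ
      rw [Real.norm_eq_abs, abs_of_nonneg (hAnn τ x σ)]
      calc A τ x σ ≤ α * (a x * b τ * c σ) := (hAbound τ hτ x hx σ hσ).2
        _ = α * (a x * c σ) * b τ := by ring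
    constructor
    · have hae : (fun τ => a x * c σ * b τ) ≤ᶠ[ae (volume.restrict (Ici (0:ℝ)))]
          fun τ => A τ x σ := by
        filter_upwards [ae_restrict_mem measurableSet_Ici] with τ hτ
        calc a x * c σ * b τ = a x * b τ * c σ := by ring
          _ ≤ A τ x σ := (hAbound τ hτ x hx σ hσ).1
      have h := integral_mono_ae (hbint.const_mul (a x * c σ)) hintA hae
      rw [integral_const_mul] at h
      calc a x * L * c σ = a x * c σ * L := by ring
        _ ≤ Theta A x σ := h
    · have hae : (fun τ => A τ x σ) ≤ᶠ[ae (volume.restrict (Ici (0:ℝ)))]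
          fun τ => α * (a x * c σ) * b τ := by
        filter_upwards [ae_restrict_mem measurableSet_Ici] with τ hτ
        calc A τ x σ ≤ α * (a x * b τ * c σ) := (hAbound τ hτ x hx σ hσ).2
          _ = α * (a x * c σ) * b τ := by ring
      have h := integral_mono_ae hintA (hbint.const_mul (α * (a x * c σ))) hae
      rw [integral_const_mul] at h
      calc Theta A x σ ≤ α * (a x * c σ) * L := h
        _ = α * (a x * L * c σ) := by ring
  -- functions in Y are a.e. measurable
  have hmeas_of : ∀ ψ : (Fin n → ℝ) → ℝ, IntegrableOn (fun x => ψ x * N x) Ω →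
      AEMeasurable ψ (volume.restrict Ω) := by
    intro ψ h
    have h1 : AEMeasurable (fun x => ψ x * N x / N x) (volume.restrict Ω) :=
      h.aestronglyMeasurable.aemeasurable.div hNmeas.aemeasurable
    refine h1.congr ?_
    filter_upwards [hNpos] with x hx
    exact mul_div_cancel_right₀ _ (ne_of_gt hx)
  -- basic properties of u = 1 - e^{-f}
  have hu_of : ∀ f : (Fin n → ℝ) → ℝ, AEMeasurable f (volume.restrict Ω) →
      (∀ᵐ x ∂(volume.restrict Ω), 0 ≤ f x) →
      AEMeasurable (fun σ => 1 - Real.exp (-f σ)) (volume.restrict Ω) ∧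
      (∀ᵐ σ ∂(volume.restrict Ω), 0 ≤ 1 - Real.exp (-f σ)) ∧
      (∀ᵐ σ ∂(volume.restrict Ω), 1 - Real.exp (-f σ) ≤ 1) := by
    intro f hf h0
    refine ⟨aemeasurable_const.sub (Real.measurable_exp.comp_aemeasurable hf.neg), ?_, ?_⟩
    · filter_upwards [h0] with σ h
      have : Real.exp (-f σ) ≤ 1 := Real.exp_le_one_iff.2 (by linarith)
      linarith
    · filter_upwards with σ
      have := Real.exp_pos (-f σ)
      linarith
  -- weighted integrability for bounded u
  have gInt : ∀ u : (Fin n → ℝ) → ℝ, AEMeasurable u (volume.restrict Ω) →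
      (∀ᵐ σ ∂(volume.restrict Ω), 0 ≤ u σ) → (∀ᵐ σ ∂(volume.restrict Ω), u σ ≤ 1) →
      IntegrableOn (fun σ => c σ * N σ * u σ) Ω := by
    intro u hu h0 h1
    refine Integrable.mono' hcN
      ((hcmeas.aemeasurable.mul hNmeas.aemeasurable).mul hu).aestronglyMeasurable ?_
    filter_upwards [h0, h1] with σ h0σ h1σ
    rw [Real.norm_eq_abs, abs_of_nonneg (mul_nonneg (mul_nonneg (hcnn σ) (hNnn σ)) h0σ)]
    exact mul_le_of_le_one_right (mul_nonneg (hcnn σ) (hNnn σ)) h1σ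
  -- the core integral estimate
  have core : ∀ u : (Fin n → ℝ) → ℝ, AEMeasurable u (volume.restrict Ω) →
      (∀ᵐ σ ∂(volume.restrict Ω), 0 ≤ u σ) → (∀ᵐ σ ∂(volume.restrict Ω), u σ ≤ 1) →
      ∀ x ∈ Ω,
      IntegrableOn (fun σ => Theta A x σ * N σ * u σ) Ω ∧
      a x * L * ∫ σ in Ω, c σ * N σ * u σ ≤ ∫ σ in Ω, Theta A x σ * N σ * u σ ∧
      ∫ σ in Ω, Theta A x σ * N σ * u σ ≤ α * (a x * L * ∫ σ in Ω, c σ * N σ * u σ) := by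
    intro u hu h0 h1 x hx
    have hg := gInt u hu h0 h1
    have haesm : AEStronglyMeasurable (fun σ => Theta A x σ * N σ * u σ) (volume.restrict Ω) :=
      (((hThetaMeas x).aemeasurable.mul hNmeas.aemeasurable).mul hu).aestronglyMeasurable
    have hbd : ∀ᵐ σ ∂(volume.restrict Ω),
        a x * L * (c σ * N σ * u σ) ≤ Theta A x σ * N σ * u σ ∧
        Theta A x σ * N σ * u σ ≤ α * (a x * L) * (c σ * N σ * u σ) := by
      filter_upwards [ae_restrict_mem hΩ, h0] with σ hσ h0σ
      have hT := hTheta x hx σ hσ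
      have hNu : 0 ≤ N σ * u σ := mul_nonneg (hNnn σ) h0σ
      constructor
      · have h' := mul_le_mul_of_nonneg_right hT.1 hNu
        calc a x * L * (c σ * N σ * u σ) = a x * L * c σ * (N σ * u σ) := by ring
          _ ≤ Theta A x σ * (N σ * u σ) := h'
          _ = Theta A x σ * N σ * u σ := by ring
      · have h' := mul_le_mul_of_nonneg_right hT.2 hNu
        calc Theta A x σ * N σ * u σ = Theta A x σ * (N σ * u σ) := by ring
          _ ≤ α * (a x * L * c σ) * (N σ * u σ) := h'
          _ = α * (a x * L) * (c σ * N σ * u σ) := by ring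
    have hint : IntegrableOn (fun σ => Theta A x σ * N σ * u σ) Ω := by
      refine Integrable.mono' (hg.const_mul (α * (a x * L))) haesm ?_
      filter_upwards [hbd, h0] with σ hσ h0σ
      rw [Real.norm_eq_abs, abs_of_nonneg (mul_nonneg (mul_nonneg (hThetaNN x σ) (hNnn σ)) h0σ)]
      exact hσ.2
    refine ⟨hint, ?_, ?_⟩
    · have h' := integral_mono_ae (hg.const_mul (a x * L)) hint (hbd.mono fun σ h => h.1)
      rwa [integral_const_mul] at h'
    · have h' := integral_mono_ae hint (hg.const_mul (α * (a x * L))) (hbd.mono fun σ h => h.2)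
      rwa [integral_const_mul, mul_assoc] at h'
  -- positivity of weighted integrals
  have Jpos : ∀ g : (Fin n → ℝ) → ℝ, AEMeasurable g (volume.restrict Ω) →
      (∀ᵐ σ ∂(volume.restrict Ω), 0 ≤ g σ) → (∀ᵐ σ ∂(volume.restrict Ω), g σ ≤ 1) →
      ¬ g =ᵐ[volume.restrict Ω] 0 → 0 < ∫ σ in Ω, c σ * N σ * g σ := by
    intro g hg h0 h1 hne
    have hφint : IntegrableOn (fun σ => N σ * g σ) Ω := by
      refine Integrable.mono' hNint (hNmeas.aemeasurable.mul hg).aestronglyMeasurable ?_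
      filter_upwards [h0, h1] with σ h0σ h1σ
      rw [Real.norm_eq_abs, abs_of_nonneg (mul_nonneg (hNnn σ) h0σ)]
      exact mul_le_of_le_one_right (hNnn σ) h1σ
    have hφnn : ∀ᵐ σ ∂(volume.restrict Ω), 0 ≤ N σ * g σ :=
      h0.mono fun σ h => mul_nonneg (hNnn σ) h
    have hφne : ¬ (fun σ => N σ * g σ) =ᵐ[volume.restrict Ω] 0 := by
      intro h
      apply hne
      filter_upwards [h, hNpos] with σ hσ hN
      simp only [Pi.zero_apply] at hσ ⊢
      rcases mul_eq_zero.1 hσ with h' | h'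
      · exact absurd h' (ne_of_gt hN)
      · exact h'
    have h' := hcpos _ hφint hφnn hφne
    simpa only [← mul_assoc] using h'
  -- pieces for V
  have hVae := hmeas_of V hVY
  have hVu := hu_of V hVae hVnn
  set JV : ℝ := ∫ σ in Ω, c σ * N σ * (1 - Real.exp (-V σ)) with hJVdef
  have hJV : 0 < JV := by
    rw [hJVdef]
    refine Jpos _ hVu.1 hVu.2.1 hVu.2.2 ?_
    intro h
    apply hVne
    filter_upwards [h, hVnn] with σ hσ h0
    simp only [Pi.zero_apply] at hσ ⊢
    rcases h0.lt_or_eq with h' | h'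
    · exfalso
      have : Real.exp (-V σ) < 1 := by
        rw [← Real.exp_zero]
        exact Real.exp_lt_exp.2 (by linarith)
      linarith
    · exact h'.symm
  have hαJV : 0 < α * JV := mul_pos hα0 hJV
  have hVup : ∀ᵐ x ∂(volume.restrict Ω), V x ≤ α * (a x * L * JV) := by
    filter_upwards [hVfix, ae_restrict_mem hΩ] with x hfix hx
    have h := (core _ hVu.1 hVu.2.1 hVu.2.2 x hx).2.2
    rw [← hJVdef] at h
    rw [hfix]
    exact h
  -- pieces for W
  have hWae := hmeas_of Winf hWY
  have hWu := hu_of Winf hWae hWnn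
  set JW : ℝ := ∫ σ in Ω, c σ * N σ * (1 - Real.exp (-Winf σ)) with hJWdef
  have hJW : 0 < JW := by
    rw [hJWdef]
    refine Jpos _ hWu.1 hWu.2.1 hWu.2.2 ?_
    intro h
    apply hWne
    filter_upwards [h, hWnn] with σ hσ h0
    simp only [Pi.zero_apply] at hσ ⊢
    rcases h0.lt_or_eq with h' | h'
    · exfalso
      have : Real.exp (-Winf σ) < 1 := by
        rw [← Real.exp_zero]
        exact Real.exp_lt_exp.2 (by linarith)
      linarith
    · exact h'.symm
  have hWlow : ∀ᵐ x ∂(volume.restrict Ω), a x * L * JW ≤ Winf x := by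
    filter_upwards [hWeq, hHnn, ae_restrict_mem hΩ] with x heq hH hx
    have h := (core _ hWu.1 hWu.2.1 hWu.2.2 x hx).2.1
    rw [← hJWdef] at h
    have hP : PsiOp Ω A N Winf x = ∫ σ in Ω, Theta A x σ * N σ * (1 - Real.exp (-Winf σ)) := rfl
    rw [heq, hP]
    linarith
  -- the improvement step
  have hstep : ∀ l : ℝ, 0 < l → l < 1 →
      (∀ᵐ x ∂(volume.restrict Ω), l * V x ≤ Winf x) →
      ∃ e : ℝ, 0 < e ∧ ∀ᵐ x ∂(volume.restrict Ω), (l + e) * V x ≤ Winf x := by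
    intro l hl0 hl1 hlV
    set gl : (Fin n → ℝ) → ℝ :=
      fun σ => (1 - Real.exp (-(l * V σ))) - l * (1 - Real.exp (-V σ)) with hgl
    have hulV := hu_of (fun σ => l * V σ) (hVae.const_mul l)
      (hVnn.mono fun x h => mul_nonneg hl0.le h)
    have hglae : AEMeasurable gl (volume.restrict Ω) := hulV.1.sub (hVu.1.const_mul l)
    have hgl0 : ∀ᵐ σ ∂(volume.restrict Ω), 0 ≤ gl σ := by
      filter_upwards [hVnn] with σ h
      have := exp_concave_ineq (t := V σ) hl0.le hl1.le
      simp only [hgl]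
      linarith
    have hgl1 : ∀ᵐ σ ∂(volume.restrict Ω), gl σ ≤ 1 := by
      filter_upwards [hVnn] with σ h
      have h1 : Real.exp (-V σ) ≤ 1 := Real.exp_le_one_iff.2 (by linarith)
      have h2 := Real.exp_pos (-(l * V σ))
      have h3 : 0 ≤ l * (1 - Real.exp (-V σ)) := mul_nonneg hl0.le (by linarith)
      simp only [hgl]
      linarith
    have hglne : ¬ gl =ᵐ[volume.restrict Ω] 0 := by
      intro h
      apply hVne
      filter_upwards [h, hVnn] with σ hσ h0
      simp only [Pi.zero_apply] at hσ ⊢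
      simp only [hgl] at hσ
      rcases h0.lt_or_eq with h' | h'
      · exfalso
        have := exp_concave_ineq_strict hl0 hl1 h'
        linarith
      · exact h'.symm
    set Kl : ℝ := ∫ σ in Ω, c σ * N σ * gl σ with hKldef
    have hKl : 0 < Kl := by
      rw [hKldef]; exact Jpos _ hglae hgl0 hgl1 hglne
    refine ⟨Kl / (α * JV), div_pos hKl hαJV, ?_⟩
    filter_upwards [hWeq, hHnn, hVup, hVfix, ae_restrict_mem hΩ] with x heq hH hup hfix hx
    have hcore_V := core _ hVu.1 hVu.2.1 hVu.2.2 x hx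
    have hcore_W := core _ hWu.1 hWu.2.1 hWu.2.2 x hx
    have hcore_lV := core _ hulV.1 hulV.2.1 hulV.2.2 x hx
    have hcore_gl := core gl hglae hgl0 hgl1 x hx
    -- monotonicity: Ψ(lV)(x) ≤ Ψ(W)(x)
    have h2 : ∫ σ in Ω, Theta A x σ * N σ * (1 - Real.exp (-(l * V σ)))
        ≤ ∫ σ in Ω, Theta A x σ * N σ * (1 - Real.exp (-Winf σ)) := by
      refine integral_mono_ae hcore_lV.1 hcore_W.1 ?_
      filter_upwards [hlV] with σ hσ
      have hTN : 0 ≤ Theta A x σ * N σ := mul_nonneg (hThetaNN x σ) (hNnn σ)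
      have hexp : Real.exp (-Winf σ) ≤ Real.exp (-(l * V σ)) :=
        Real.exp_le_exp.2 (by linarith)
      exact mul_le_mul_of_nonneg_left (by linarith) hTN
    -- splitting Ψ(lV)(x)
    have hptw : ∀ σ, Theta A x σ * N σ * (1 - Real.exp (-(l * V σ)))
        = l * (Theta A x σ * N σ * (1 - Real.exp (-V σ))) + Theta A x σ * N σ * gl σ := by
      intro σ
      simp only [hgl]
      ring
    have hsplit : ∫ σ in Ω, Theta A x σ * N σ * (1 - Real.exp (-(l * V σ)))
        = l * (∫ σ in Ω, Theta A x σ * N σ * (1 - Real.exp (-V σ)))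
          + ∫ σ in Ω, Theta A x σ * N σ * gl σ := by
      calc ∫ σ in Ω, Theta A x σ * N σ * (1 - Real.exp (-(l * V σ)))
          = ∫ σ in Ω, (l * (Theta A x σ * N σ * (1 - Real.exp (-V σ)))
              + Theta A x σ * N σ * gl σ) :=
            integral_congr_ae (Filter.Eventually.of_forall fun σ => hptw σ)
        _ = l * (∫ σ in Ω, Theta A x σ * N σ * (1 - Real.exp (-V σ)))
              + ∫ σ in Ω, Theta A x σ * N σ * gl σ := by
            rw [integral_add (hcore_V.1.const_mul l) hcore_gl.1, integral_const_mul]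
    -- lower bound on the gl-term
    have h4 : a x * L * Kl ≤ ∫ σ in Ω, Theta A x σ * N σ * gl σ := by
      have h' := hcore_gl.2.1
      rw [← hKldef] at h'
      exact h'
    -- fixed point identity
    have h5 : ∫ σ in Ω, Theta A x σ * N σ * (1 - Real.exp (-V σ)) = V x := hfix.symm
    -- compare a x * L * Kl with (Kl/(α JV)) * V x
    have h6 : Kl / (α * JV) * V x ≤ a x * L * Kl := by
      have h7 : Kl / (α * JV) * V x ≤ Kl / (α * JV) * (α * (a x * L * JV)) :=
        mul_le_mul_of_nonneg_left hup (div_pos hKl hαJV).le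
      have h8 : Kl / (α * JV) * (α * (a x * L * JV)) = a x * L * Kl := by
        field_simp
      linarith
    have h9 : PsiOp Ω A N Winf x ≤ Winf x := by
      rw [heq]; linarith
    have hPW : PsiOp Ω A N Winf x
        = ∫ σ in Ω, Theta A x σ * N σ * (1 - Real.exp (-Winf σ)) := rfl
    calc (l + Kl / (α * JV)) * V x = l * V x + Kl / (α * JV) * V x := by ring
      _ ≤ l * V x + a x * L * Kl := by linarith
      _ ≤ l * V x + ∫ σ in Ω, Theta A x σ * N σ * gl σ := by linarith
      _ = ∫ σ in Ω, Theta A x σ * N σ * (1 - Real.exp (-(l * V σ))) := by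
          rw [hsplit, h5]
      _ ≤ ∫ σ in Ω, Theta A x σ * N σ * (1 - Real.exp (-Winf σ)) := h2
      _ = PsiOp Ω A N Winf x := hPW.symm
      _ ≤ Winf x := h9
  -- the set of comparison constants
  set S : Set ℝ :=
    {l : ℝ | 0 ≤ l ∧ l ≤ 1 ∧ ∀ᵐ x ∂(volume.restrict Ω), l * V x ≤ Winf x} with hSdef
  have hminpos : 0 < min (JW / (α * JV)) 1 := lt_min (div_pos hJW hαJV) one_pos
  have hSne : min (JW / (α * JV)) 1 ∈ S := by
    refine ⟨hminpos.le, min_le_right _ _, ?_⟩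
    filter_upwards [hVup, hWlow, hVnn] with x hup hlow h0
    have h1 : JW / (α * JV) * V x ≤ a x * L * JW := by
      have h2 := mul_le_mul_of_nonneg_left hup (div_pos hJW hαJV).le
      have h3 : JW / (α * JV) * (α * (a x * L * JV)) = a x * L * JW := by
        field_simp
      linarith
    calc min (JW / (α * JV)) 1 * V x ≤ JW / (α * JV) * V x :=
          mul_le_mul_of_nonneg_right (min_le_left _ _) h0
      _ ≤ a x * L * JW := h1
      _ ≤ Winf x := hlow
  have hbddS : BddAbove S := ⟨1, fun l hl => hl.2.1⟩
  set ls : ℝ := sSup S with hls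
  have hlspos : 0 < ls := lt_of_lt_of_le hminpos (le_csSup hbddS hSne)
  have hls1 : ls ≤ 1 := csSup_le ⟨_, hSne⟩ fun l hl => hl.2.1
  have hlsae : ∀ᵐ x ∂(volume.restrict Ω), ls * V x ≤ Winf x := by
    have hex : ∀ k : ℕ, ∃ l, l ∈ S ∧ ls - 1 / ((k:ℝ) + 1) < l := by
      intro k
      have h1 : (0:ℝ) < 1 / ((k:ℝ) + 1) := by positivity
      obtain ⟨l, hlS, hl⟩ := exists_lt_of_lt_csSup ⟨_, hSne⟩ (by linarith : ls - 1/((k:ℝ)+1) < ls)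
      exact ⟨l, hlS, hl⟩
    choose lk hlkS hlk using hex
    have hall : ∀ᵐ x ∂(volume.restrict Ω), ∀ k : ℕ, lk k * V x ≤ Winf x :=
      ae_all_iff.2 fun k => (hlkS k).2.2
    filter_upwards [hall, hVnn] with x hx h0
    have hten : Filter.Tendsto (fun k : ℕ => (ls - 1 / ((k:ℝ) + 1)) * V x)
        Filter.atTop (nhds (ls * V x)) := by
      have h1 := tendsto_one_div_add_atTop_nhds_zero_nat (𝕜 := ℝ)
      have h2 := ((tendsto_const_nhds (x := ls) (f := Filter.atTop (α := ℕ))).sub h1).mul_const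
        (V x)
      simpa using h2
    refine le_of_tendsto hten (Filter.Eventually.of_forall fun k => ?_)
    calc (ls - 1 / ((k:ℝ) + 1)) * V x ≤ lk k * V x :=
          mul_le_mul_of_nonneg_right (hlk k).le h0
      _ ≤ Winf x := hx k
  have hls_eq : ls = 1 := by
    by_contra hne1
    have hlt : ls < 1 := lt_of_le_of_ne hls1 hne1
    obtain ⟨e, he, hae⟩ := hstep ls hlspos hlt hlsae
    have hmem : min (ls + e) 1 ∈ S := by
      refine ⟨le_min (by linarith) zero_le_one, min_le_right _ _, ?_⟩
      filter_upwards [hae, hVnn] with x h1 h0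
      calc min (ls + e) 1 * V x ≤ (ls + e) * V x :=
            mul_le_mul_of_nonneg_right (min_le_left _ _) h0
        _ ≤ Winf x := h1
    have h1 := le_csSup hbddS hmem
    have h2 : ls < min (ls + e) 1 := lt_min (by linarith) hlt
    rw [← hls] at h1
    linarith
  filter_upwards [hlsae] with x hx
  rw [hls_eq, one_mul] at hx
  exact hx
end

section
/- For every φ ∈ L^∞(Ω) with φ ≥ 0 a.e., the effective reproduction numbers for S-control and I-control coincide: r(T_S[φ]) = r(T_I[φ]), where T_S[φ] and T_I[φ] are the bounded linear operators on L¹(Ω) given by (T_S[φ]ψ)(x) = N(x)e^{−φ(x)}∫_Ω Θ(x,σ)ψ(σ) dσ and (T_I[φ]ψ)(x) = N(x)∫_Ω Θ(x,σ)e^{−φ(σ)}ψ(σ) dσ. -/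
open MeasureTheory Set Filter
open scoped ENNReal

noncomputable def mulL1 {X : Type*} [MeasurableSpace X] {μ : Measure X}
    (g : X → ℝ) (hg : Measurable g) (C : ℝ) (hC0 : 0 ≤ C) (hC : ∀ x, ‖g x‖ ≤ C) :
    Lp ℝ 1 μ →L[ℝ] Lp ℝ 1 μ :=
  LinearMap.mkContinuous
    { toFun := fun ψ =>
        ((L1.integrable_coeFn ψ).bdd_mul hg.aestronglyMeasurable (Eventually.of_forall hC)).toL1 _
      map_add' := fun ψ₁ ψ₂ => by
        rw [← Integrable.toL1_add _ _
            ((L1.integrable_coeFn ψ₁).bdd_mul hg.aestronglyMeasurable (Eventually.of_forall hC))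
            ((L1.integrable_coeFn ψ₂).bdd_mul hg.aestronglyMeasurable (Eventually.of_forall hC)),
          Integrable.toL1_eq_toL1_iff]
        filter_upwards [Lp.coeFn_add ψ₁ ψ₂] with x hx
        rw [hx]; simp [mul_add]
      map_smul' := fun r ψ => by
        rw [RingHom.id_apply,
          ← Integrable.toL1_smul _
            ((L1.integrable_coeFn ψ).bdd_mul hg.aestronglyMeasurable (Eventually.of_forall hC)) r,
          Integrable.toL1_eq_toL1_iff]
        filter_upwards [Lp.coeFn_smul r ψ] with x hx
        rw [hx]; simp [smul_eq_mul]; ring }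
    C (fun ψ => by
      simp only [LinearMap.coe_mk, AddHom.coe_mk]
      rw [Integrable.norm_toL1_eq_lintegral_norm, L1.norm_def,
        ← ENNReal.toReal_ofReal hC0, ← ENNReal.toReal_mul]
      apply ENNReal.toReal_mono
      · exact ENNReal.mul_ne_top ENNReal.ofReal_ne_top (L1.integrable_coeFn ψ).2.ne
      · rw [← lintegral_const_mul' _ _ ENNReal.ofReal_ne_top]
        apply lintegral_mono fun x => ?_
        rw [← ofReal_norm, ← ENNReal.ofReal_mul hC0]
        apply ENNReal.ofReal_le_ofReal
        calc ‖g x * ψ x‖ = ‖g x‖ * ‖ψ x‖ := norm_mul _ _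
          _ ≤ C * ‖ψ x‖ := by gcongr; exact hC x)

theorem coeFn_mulL1 {X : Type*} [MeasurableSpace X] {μ : Measure X}
    (g : X → ℝ) (hg : Measurable g) (C : ℝ) (hC0 : 0 ≤ C) (hC : ∀ x, ‖g x‖ ≤ C)
    (ψ : Lp ℝ 1 μ) :
    ⇑(mulL1 g hg C hC0 hC ψ) =ᵐ[μ] fun x => g x * ψ x :=
  Integrable.coeFn_toL1 ((L1.integrable_coeFn ψ).bdd_mul hg.aestronglyMeasurable (Eventually.of_forall hC))

/-- for every nonnegative `φ ∈ L^∞(Ω)`, the S-control and I-control effective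
next generation operators have the same spectral radius: `r(T_S[φ]) = r(T_I[φ])`. -/
theorem S_control_I_control_same_reproduction_number
    {n : ℕ} (Ω : Set (Fin n → ℝ)) (hΩ : MeasurableSet Ω)
    (N : (Fin n → ℝ) → ℝ) (hNmeas : Measurable N) (hNnn : ∀ x, 0 ≤ N x)
    (hNint : IntegrableOn N Ω)
    (hNpos : ∀ᵐ x ∂(volume.restrict Ω), 0 < N x)
    (A : ℝ → (Fin n → ℝ) → (Fin n → ℝ) → ℝ)
    (hAmeas : Measurable (fun p : ℝ × (Fin n → ℝ) × (Fin n → ℝ) => A p.1 p.2.1 p.2.2))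
    (hAnn : ∀ τ x σ, 0 ≤ A τ x σ)
    -- Assumption 1(1), with c ∈ L^∞
    (α : ℝ) (hα : 1 < α)
    (a : (Fin n → ℝ) → ℝ) (b : ℝ → ℝ) (c : (Fin n → ℝ) → ℝ)
    (hameas : Measurable a) (hbmeas : Measurable b) (hcmeas : Measurable c)
    (hann : ∀ x, 0 ≤ a x) (hbnn : ∀ τ, 0 ≤ b τ) (hcnn : ∀ σ, 0 ≤ c σ)
    (haN : IntegrableOn (fun x => a x * N x) Ω)
    (hbint : IntegrableOn b (Ici 0))
    (hcN : IntegrableOn (fun x => c x * N x) Ω)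
    (hc2N : IntegrableOn (fun x => c x ^ 2 * N x) Ω)
    (hcbdd : ∃ M, ∀ x, c x ≤ M)
    (hAbound : ∀ τ ∈ Ici (0:ℝ), ∀ x ∈ Ω, ∀ σ ∈ Ω,
      a x * b τ * c σ ≤ A τ x σ ∧ A τ x σ ≤ α * (a x * b τ * c σ))
    -- the control state φ ∈ L^∞₊(Ω)
    (φ : (Fin n → ℝ) → ℝ) (hφmeas : Measurable φ)
    (hφnn : ∀ᵐ x ∂(volume.restrict Ω), 0 ≤ φ x)
    (hφbdd : ∃ M, ∀ x, φ x ≤ M)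
    -- the S-control and I-control effective next generation operators
    (TS TI : Lp ℝ 1 (volume.restrict Ω) →L[ℝ] Lp ℝ 1 (volume.restrict Ω))
    (hTS : ∀ ψ : Lp ℝ 1 (volume.restrict Ω),
      ⇑(TS ψ) =ᵐ[volume.restrict Ω]
        fun x => N x * Real.exp (-φ x) *
          ∫ σ in Ω, (∫ τ in Ici (0:ℝ), A τ x σ) * ψ σ)
    (hTI : ∀ ψ : Lp ℝ 1 (volume.restrict Ω),
      ⇑(TI ψ) =ᵐ[volume.restrict Ω]
        fun x => N x *
          ∫ σ in Ω, (∫ τ in Ici (0:ℝ), A τ x σ) * (Real.exp (-φ σ) * ψ σ)) :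
    spectralRadius ℝ TS = spectralRadius ℝ TI := by

  classical
  obtain ⟨Mφ, hMφ⟩ := hφbdd
  set g : (Fin n → ℝ) → ℝ := fun x => Real.exp (-(max (φ x) 0)) with hgdef
  set gi : (Fin n → ℝ) → ℝ := fun x => Real.exp (max (φ x) 0) with hgidef
  have hgmeas : Measurable g := ((hφmeas.max measurable_const).neg).exp
  have hgimeas : Measurable gi := (hφmeas.max measurable_const).exp
  have hgbd : ∀ x, ‖g x‖ ≤ 1 := fun x => by
    rw [Real.norm_eq_abs, abs_of_pos (Real.exp_pos _)]
    exact Real.exp_le_one_iff.2 (neg_nonpos.2 (le_max_right _ _))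
  have hgibd : ∀ x, ‖gi x‖ ≤ Real.exp (max Mφ 0) := fun x => by
    rw [Real.norm_eq_abs, abs_of_pos (Real.exp_pos _)]
    exact Real.exp_le_exp.2 (max_le_max (hMφ x) le_rfl)
  set M := mulL1 (μ := volume.restrict Ω) g hgmeas 1 zero_le_one hgbd with hMdef
  set Mi := mulL1 (μ := volume.restrict Ω) gi hgimeas (Real.exp (max Mφ 0)) (Real.exp_pos _).le hgibd
    with hMidef
  have hcancel : ∀ x, g x * gi x = 1 := fun x => by
    rw [hgdef, hgidef, ← Real.exp_add]; simp
  have hcancel' : ∀ x, gi x * g x = 1 := fun x => by rw [mul_comm]; exact hcancel x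
  have hMMi : M * Mi = 1 := by
    ext1 ψ
    apply Lp.ext
    rw [ContinuousLinearMap.mul_apply, ContinuousLinearMap.one_apply]
    filter_upwards [coeFn_mulL1 g hgmeas 1 zero_le_one hgbd (Mi ψ),
      coeFn_mulL1 gi hgimeas _ (Real.exp_pos _).le hgibd ψ] with x h1 h2
    rw [h1, h2, ← mul_assoc, hcancel x, one_mul]
  have hMiM : Mi * M = 1 := by
    ext1 ψ
    apply Lp.ext
    rw [ContinuousLinearMap.mul_apply, ContinuousLinearMap.one_apply]
    filter_upwards [coeFn_mulL1 gi hgimeas _ (Real.exp_pos _).le hgibd (M ψ),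
      coeFn_mulL1 g hgmeas 1 zero_le_one hgbd ψ] with x h1 h2
    rw [h1, h2, ← mul_assoc, hcancel' x, one_mul]
  have hg_ae : g =ᵐ[volume.restrict Ω] fun x => Real.exp (-φ x) := by
    filter_upwards [hφnn] with x hx
    rw [hgdef]; simp only []
    rw [max_eq_left hx]
  have hkey : M * TI = TS * M := by
    ext1 ψ
    apply Lp.ext
    rw [ContinuousLinearMap.mul_apply, ContinuousLinearMap.mul_apply]
    have hMψ : ⇑(M ψ) =ᵐ[volume.restrict Ω] fun σ => Real.exp (-φ σ) * ψ σ := by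
      filter_upwards [coeFn_mulL1 g hgmeas 1 zero_le_one hgbd ψ, hg_ae] with σ h1 h2
      rw [h1, h2]
    have hint : ∀ x, (∫ σ in Ω, (∫ τ in Ici (0:ℝ), A τ x σ) * (M ψ) σ)
        = ∫ σ in Ω, (∫ τ in Ici (0:ℝ), A τ x σ) * (Real.exp (-φ σ) * ψ σ) := fun x =>
      integral_congr_ae (by filter_upwards [hMψ] with σ h; rw [h])
    filter_upwards [coeFn_mulL1 g hgmeas 1 zero_le_one hgbd (TI ψ), hTI ψ,
      hTS (M ψ), hg_ae] with x h2 h3 h1 hgx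
    rw [h2, h3, h1, hint x, hgx]
    ring
  have hTIeq : TI = Mi * TS * M := by
    calc TI = 1 * TI := (one_mul TI).symm
      _ = (Mi * M) * TI := by rw [hMiM]
      _ = Mi * (M * TI) := by rw [mul_assoc]
      _ = Mi * (TS * M) := by rw [hkey]
      _ = Mi * TS * M := by rw [mul_assoc]
  set u : (Lp ℝ 1 (volume.restrict Ω) →L[ℝ] Lp ℝ 1 (volume.restrict Ω))ˣ := ⟨Mi, M, hMiM, hMMi⟩ with hudef
  have hspec : spectrum ℝ TI = spectrum ℝ TS := by
    rw [hTIeq]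
    exact spectrum.units_conjugate (u := u)
  unfold spectralRadius
  rw [hspec]
end

section
/- Let Ω = [0,∞) and suppose Assumptions 1(1) and 2 hold. If W_∞ ∈ Y is nonnegative, nonzero, and satisfies the final size inequality W_∞(x) ≥ ∫_Ω Θ(x,σ)N(σ)(1 − e^{−W_∞(σ)}) dσ for a.e. x (in particular if W_∞ = H_∞ + Ψ(W_∞) with H_∞ ≥ 0), then the final reproduction number satisfies R_S[W_∞] := r(T_S[W_∞]) < 1, where (T_S[W_∞]ψ)(x) = N(x)e^{−W_∞(x)}∫_Ω Θ(x,σ)ψ(σ) dσ on L¹(Ω). -/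
open MeasureTheory Set Filter
open scoped ENNReal

theorem aux_specRadius_lt_one {E : Type*} [NormedAddCommGroup E] [NormedSpace ℝ E]
    [CompleteSpace E] (T : E →L[ℝ] E) (C θ : ℝ) (hθ0 : 0 < θ) (hθ1 : θ < 1)
    (hbd : ∀ n : ℕ, ‖T ^ (n + 1)‖ ≤ C * θ ^ n) :
    spectralRadius ℝ T < 1 := by
  have hk : ∀ k ∈ spectrum ℝ T, ‖k‖ ≤ θ := by
    intro k hk
    by_contra hgt
    push_neg at hgt
    have hpow : ∀ n : ℕ, ‖k‖ ^ (n + 1) ≤ C * θ ^ n := by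
      intro n
      have hmem : k ^ (n + 1) ∈ spectrum ℝ (T ^ (n + 1)) :=
        spectrum.pow_image_subset T (n + 1) ⟨k, hk, rfl⟩
      have h1 : ‖k ^ (n+1)‖ ≤ ‖T ^ (n+1)‖ * ‖(1 : E →L[ℝ] E)‖ :=
        spectrum.norm_le_norm_mul_of_mem hmem
      have h2 : ‖(1 : E →L[ℝ] E)‖ ≤ 1 := ContinuousLinearMap.norm_id_le
      calc ‖k‖ ^ (n+1) = ‖k ^ (n+1)‖ := (norm_pow k (n+1)).symm
        _ ≤ ‖T ^ (n+1)‖ * ‖(1 : E →L[ℝ] E)‖ := h1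
        _ ≤ ‖T ^ (n+1)‖ * 1 := mul_le_mul_of_nonneg_left h2 (norm_nonneg _)
        _ ≤ C * θ ^ n := by rw [mul_one]; exact hbd n
    have hr : 1 < ‖k‖ / θ := (one_lt_div hθ0).2 hgt
    obtain ⟨n, hn⟩ := pow_unbounded_of_one_lt (C / θ) hr
    have h1 : ‖k‖ ^ (n+1) ≤ C * θ ^ n := hpow n
    have hkpos : 0 < ‖k‖ := lt_trans hθ0 hgt
    have hθn : (0:ℝ) < θ ^ n := pow_pos hθ0 n
    rw [div_pow, lt_div_iff₀ hθn] at hn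
    have h2' : C * θ ^ n < ‖k‖ ^ n * θ := by
      have h := mul_lt_mul_of_pos_right hn hθ0
      calc C * θ ^ n = C / θ * θ ^ n * θ := by field_simp
        _ < ‖k‖ ^ n * θ := h
    have h3 : ‖k‖ ^ n * θ ≤ ‖k‖ ^ (n+1) := by
      rw [pow_succ]
      exact mul_le_mul_of_nonneg_left hgt.le (pow_nonneg hkpos.le n)
    linarith
  have hle : spectralRadius ℝ T ≤ ENNReal.ofReal θ := by
    apply iSup₂_le
    intro k hkmem
    rw [← ENNReal.ofReal_coe_nnreal, coe_nnnorm]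
    exact ENNReal.ofReal_le_ofReal (hk k hkmem)
  exact lt_of_le_of_lt hle (ENNReal.ofReal_lt_one.2 hθ1)

/-- scalar core of the contraction estimate -/
theorem aux_scalar (ε dl ρ G U Mv Q : ℝ) (hε0 : 0 < ε) (hε2 : ε ≤ 1/2)
    (hεG : ε * G ≤ ρ / 2) (hδ : 0 < dl) (hρ : 0 < ρ)
    (hU : 0 ≤ U) (hM : 0 ≤ Mv)
    (h1 : Q ≤ U - ρ * Mv) (h2 : Q ≤ G * Mv) :
    (1 + ε/2) * Q ≤ (1 - ε/2) * (U + (dl * ε / 2) * Mv) := by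
  have e1 : Q ≤ (1 - ε) * (U - ρ * Mv) + ε * (G * Mv) := by nlinarith
  have e2 : (1 + ε/2) * Q ≤ (1 + ε/2) * ((1 - ε) * (U - ρ * Mv) + ε * (G * Mv)) := by
    apply mul_le_mul_of_nonneg_left e1; linarith
  have e3 : ε * (G * Mv) ≤ (1 - ε) * (ρ * Mv) := by
    nlinarith [mul_le_mul_of_nonneg_right hεG hM, mul_nonneg hρ.le hM]
  nlinarith [mul_nonneg (mul_nonneg hδ.le hε0.le) hM, mul_nonneg hε0.le hU,
    mul_nonneg (mul_nonneg hε0.le hε0.le) hU, e3, mul_nonneg hρ.le hM]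

set_option maxHeartbeats 2000000 in
/-- the final reproduction number is subcritical: if `W_∞ ∈ Y₊` is nonzero and
satisfies the final size inequality, then `R_S[W_∞] = r(T_S[W_∞]) < 1`. -/
theorem final_reproduction_number_lt_one
    (N : ℝ → ℝ) (hNmeas : Measurable N) (hNnn : ∀ x, 0 ≤ N x)
    (hNint : IntegrableOn N (Ici 0))
    (hNpos : ∀ᵐ x ∂(volume.restrict (Ici (0:ℝ))), 0 < N x)
    (A : ℝ → ℝ → ℝ → ℝ)
    (hAmeas : Measurable (fun p : ℝ × ℝ × ℝ => A p.1 p.2.1 p.2.2))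
    (hAnn : ∀ τ x σ, 0 ≤ A τ x σ)
    -- Assumption 1(1)
    (α : ℝ) (hα : 1 < α)
    (a b c : ℝ → ℝ)
    (hameas : Measurable a) (hbmeas : Measurable b) (hcmeas : Measurable c)
    (hann : ∀ x, 0 ≤ a x) (hbnn : ∀ τ, 0 ≤ b τ) (hcnn : ∀ σ, 0 ≤ c σ)
    (haN : IntegrableOn (fun x => a x * N x) (Ici 0))
    (hbint : IntegrableOn b (Ici 0))
    (hcN : IntegrableOn (fun x => c x * N x) (Ici 0))
    (hc2N : IntegrableOn (fun x => c x ^ 2 * N x) (Ici 0))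
    (hAbound : ∀ τ ∈ Ici (0:ℝ), ∀ x ∈ Ici (0:ℝ), ∀ σ ∈ Ici (0:ℝ),
      a x * b τ * c σ ≤ A τ x σ ∧ A τ x σ ≤ α * (a x * b τ * c σ))
    -- Assumption 2
    (haNpos : ∀ f : ℝ → ℝ, Measurable f → (∀ x, 0 ≤ f x) → (∃ M, ∀ x, f x ≤ M) →
      ¬ f =ᵐ[volume.restrict (Ici (0:ℝ))] 0 →
      0 < ∫ x in Ici (0:ℝ), f x * (a x * N x))
    (hcbdd : ∃ M, ∀ x, c x ≤ M)
    (hcpos : ∀ φ : ℝ → ℝ, IntegrableOn φ (Ici 0) →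
      (∀ᵐ x ∂(volume.restrict (Ici (0:ℝ))), 0 ≤ φ x) →
      ¬ φ =ᵐ[volume.restrict (Ici (0:ℝ))] 0 →
      0 < ∫ x in Ici (0:ℝ), c x * φ x)
    (hΘshift : TendstoUniformlyOn
      (fun (h : ℝ) (σ : ℝ) => ∫ x in Ici (0:ℝ),
        |indicator (Ici (0:ℝ)) (fun y => N y * ∫ τ in Ici (0:ℝ), A τ y σ) (x + h)
          - N x * ∫ τ in Ici (0:ℝ), A τ x σ|)
      (fun _ => 0) (nhds (0:ℝ)) (Ici 0))
    -- W_∞ ∈ Y₊ nonzero satisfying the final size inequality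
    (Winf : ℝ → ℝ)
    (hWY : IntegrableOn (fun x => Winf x * N x) (Ici 0))
    (hWnn : ∀ᵐ x ∂(volume.restrict (Ici (0:ℝ))), 0 ≤ Winf x)
    (hWne : ¬ Winf =ᵐ[volume.restrict (Ici (0:ℝ))] 0)
    (hWineq : ∀ᵐ x ∂(volume.restrict (Ici (0:ℝ))),
      (∫ σ in Ici (0:ℝ), (∫ τ in Ici (0:ℝ), A τ x σ) * N σ * (1 - Real.exp (-Winf σ)))
        ≤ Winf x)
    -- the effective next generation operator T_S[W_∞] on L¹(Ω)
    (TS : Lp ℝ 1 (volume.restrict (Ici (0:ℝ))) →L[ℝ] Lp ℝ 1 (volume.restrict (Ici (0:ℝ))))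
    (hTS : ∀ ψ : Lp ℝ 1 (volume.restrict (Ici (0:ℝ))),
      ⇑(TS ψ) =ᵐ[volume.restrict (Ici (0:ℝ))]
        fun x => N x * Real.exp (-Winf x) *
          ∫ σ in Ici (0:ℝ), (∫ τ in Ici (0:ℝ), A τ x σ) * ψ σ) :
    spectralRadius ℝ TS < 1 := by
  classical
  obtain ⟨M, hM⟩ := hcbdd
  have hα0 : (0:ℝ) < α := lt_trans one_pos hα
  have hM0 : (0:ℝ) ≤ M := le_trans (hcnn 0) (hM 0)
  have hmem : ∀ᵐ x ∂(volume.restrict (Ici (0:ℝ))), x ∈ Ici (0:ℝ) :=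
    ae_restrict_mem measurableSet_Ici
  set Θ : ℝ → ℝ → ℝ := fun x σ => ∫ τ, A τ x σ ∂(volume.restrict (Ici (0:ℝ))) with hΘdef
  set Ex : ℝ → ℝ := fun x => Real.exp (-Winf x) with hExdef
  set L : ℝ := ∫ τ, b τ ∂(volume.restrict (Ici (0:ℝ))) with hLdef
  have hEpos : ∀ x, 0 < Ex x := fun x => Real.exp_pos _
  have hL0 : (0:ℝ) ≤ L := integral_nonneg_of_ae (Eventually.of_forall fun τ => hbnn τ)
  set u : ℝ → ℝ := fun x => N x * Ex x * Winf x with hudef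
  set m : ℝ → ℝ := fun x => L * (a x * (N x * Ex x)) with hmdef
  have hm_nn : ∀ x, 0 ≤ m x := fun x =>
    mul_nonneg hL0 (mul_nonneg (hann x) (mul_nonneg (hNnn x) (hEpos x).le))
  have hΘnn : ∀ x σ, 0 ≤ Θ x σ := fun x σ =>
    integral_nonneg_of_ae (Eventually.of_forall fun τ => hAnn τ x σ)
  have hΘmeas : ∀ x, Measurable (Θ x) := by
    intro x
    have h1 : Measurable (Function.uncurry fun σ τ => A τ x σ) := by
      exact hAmeas.comp (measurable_snd.prodMk (measurable_const.prodMk measurable_fst))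
    exact h1.stronglyMeasurable.integral_prod_right.measurable
  -- integrability of A in τ, and two-sided bounds on Θ
  have hAint : ∀ x ∈ Ici (0:ℝ), ∀ σ ∈ Ici (0:ℝ), Integrable (fun τ => A τ x σ) (volume.restrict (Ici (0:ℝ))) := by
    intro x hx σ hσ
    refine Integrable.mono' (hbint.const_mul (α * (a x * c σ))) ?_ ?_
    · have hg : Measurable (fun τ : ℝ => ((τ, (x, σ)) : ℝ × ℝ × ℝ)) :=
        measurable_id.prodMk measurable_const
      exact (hAmeas.comp hg).aestronglyMeasurable
    · filter_upwards [hmem] with τ hτ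
      rw [Real.norm_eq_abs, abs_of_nonneg (hAnn τ x σ)]
      calc A τ x σ ≤ α * (a x * b τ * c σ) := (hAbound τ hτ x hx σ hσ).2
        _ = α * (a x * c σ) * b τ := by ring
  have hΘub : ∀ x ∈ Ici (0:ℝ), ∀ σ ∈ Ici (0:ℝ), Θ x σ ≤ α * L * (a x * c σ) := by
    intro x hx σ hσ
    have h : (∫ τ, A τ x σ ∂(volume.restrict (Ici (0:ℝ)))) ≤ ∫ τ, (α * (a x * c σ)) * b τ ∂(volume.restrict (Ici (0:ℝ))) := by
      refine integral_mono_of_nonneg (Eventually.of_forall fun τ => hAnn τ x σ)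
        (hbint.const_mul _) ?_
      filter_upwards [hmem] with τ hτ
      calc A τ x σ ≤ α * (a x * b τ * c σ) := (hAbound τ hτ x hx σ hσ).2
        _ = α * (a x * c σ) * b τ := by ring
    calc Θ x σ ≤ ∫ τ, (α * (a x * c σ)) * b τ ∂(volume.restrict (Ici (0:ℝ))) := h
      _ = (α * (a x * c σ)) * L := by rw [integral_const_mul]
      _ = α * L * (a x * c σ) := by ring
  have hΘlb : ∀ x ∈ Ici (0:ℝ), ∀ σ ∈ Ici (0:ℝ), L * (a x * c σ) ≤ Θ x σ := by
    intro x hx σ hσ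
    have h : (∫ τ, (a x * c σ) * b τ ∂(volume.restrict (Ici (0:ℝ)))) ≤ ∫ τ, A τ x σ ∂(volume.restrict (Ici (0:ℝ))) := by
      refine integral_mono_of_nonneg (Eventually.of_forall fun τ =>
        mul_nonneg (mul_nonneg (hann x) (hcnn σ)) (hbnn τ)) (hAint x hx σ hσ) ?_
      filter_upwards [hmem] with τ hτ
      calc (a x * c σ) * b τ = a x * b τ * c σ := by ring
        _ ≤ A τ x σ := (hAbound τ hτ x hx σ hσ).1
    calc L * (a x * c σ) = (a x * c σ) * L := by ring
      _ = ∫ τ, (a x * c σ) * b τ ∂(volume.restrict (Ici (0:ℝ))) := (integral_const_mul _ _).symm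
      _ ≤ Θ x σ := h
  -- measurability of the a.e.-defined data
  have hWaem : AEMeasurable Winf (volume.restrict (Ici (0:ℝ))) := by
    have h1 : AEMeasurable (fun x => Winf x * N x / N x) (volume.restrict (Ici (0:ℝ))) :=
      hWY.aemeasurable.div hNmeas.aemeasurable
    refine h1.congr ?_
    filter_upwards [hNpos] with x hx
    rw [mul_div_assoc, div_self hx.ne', mul_one]
  have hEaem : AEMeasurable Ex (volume.restrict (Ici (0:ℝ))) := Real.measurable_exp.comp_aemeasurable hWaem.neg
  have huaem : AEMeasurable u (volume.restrict (Ici (0:ℝ))) := (hNmeas.aemeasurable.mul hEaem).mul hWaem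
  have hmaem : AEMeasurable m (volume.restrict (Ici (0:ℝ))) :=
    (hameas.aemeasurable.mul (hNmeas.aemeasurable.mul hEaem)).const_mul L
  have hEle1 : ∀ᵐ x ∂(volume.restrict (Ici (0:ℝ))), Ex x ≤ 1 := by
    filter_upwards [hWnn] with x hx
    simp only [hExdef]
    calc Real.exp (-Winf x) ≤ Real.exp 0 := Real.exp_le_exp.2 (by linarith)
      _ = 1 := Real.exp_zero
  have hu_nn : ∀ᵐ x ∂(volume.restrict (Ici (0:ℝ))), 0 ≤ u x := by
    filter_upwards [hWnn] with x hx
    exact mul_nonneg (mul_nonneg (hNnn x) (hEpos x).le) hx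
  have hu_int : Integrable u (volume.restrict (Ici (0:ℝ))) := by
    refine Integrable.mono' hWY huaem.aestronglyMeasurable ?_
    filter_upwards [hWnn, hEle1] with x h1 h2
    rw [Real.norm_eq_abs, abs_of_nonneg (mul_nonneg (mul_nonneg (hNnn x) (hEpos x).le) h1)]
    nlinarith [mul_nonneg (mul_nonneg (hNnn x) h1) (sub_nonneg.2 h2)]
  have hm_int : Integrable m (volume.restrict (Ici (0:ℝ))) := by
    refine Integrable.mono' (haN.const_mul L) hmaem.aestronglyMeasurable ?_
    filter_upwards [hEle1] with x h2
    rw [Real.norm_eq_abs, abs_of_nonneg (hm_nn x)]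
    simp only [hmdef]
    nlinarith [mul_nonneg (mul_nonneg hL0 (hann x)) (mul_nonneg (hNnn x) (sub_nonneg.2 h2))]
  -- the weighted integrands and their properties
  have hφδaem : AEMeasurable (fun σ => N σ * (1 - Ex σ)) (volume.restrict (Ici (0:ℝ))) :=
    hNmeas.aemeasurable.mul (aemeasurable_const.sub hEaem)
  have hφδ_nn : ∀ᵐ σ ∂(volume.restrict (Ici (0:ℝ))), 0 ≤ N σ * (1 - Ex σ) := by
    filter_upwards [hEle1] with σ h
    exact mul_nonneg (hNnn σ) (by linarith)
  have hcφδ : Integrable (fun σ => c σ * (N σ * (1 - Ex σ))) (volume.restrict (Ici (0:ℝ))) := by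
    refine Integrable.mono' hcN ((hcmeas.aemeasurable.mul hφδaem).aestronglyMeasurable) ?_
    filter_upwards [hEle1, hφδ_nn] with σ h1 h2
    rw [Real.norm_eq_abs, abs_of_nonneg (mul_nonneg (hcnn σ) h2)]
    nlinarith [mul_nonneg (mul_nonneg (hcnn σ) (hNnn σ)) (hEpos σ).le]
  have hφρaem : AEMeasurable (fun σ => N σ * (1 - Ex σ - Winf σ * Ex σ)) (volume.restrict (Ici (0:ℝ))) :=
    hNmeas.aemeasurable.mul ((aemeasurable_const.sub hEaem).sub (hWaem.mul hEaem))
  have hφρ_nn : ∀ᵐ σ ∂(volume.restrict (Ici (0:ℝ))), 0 ≤ N σ * (1 - Ex σ - Winf σ * Ex σ) := by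
    filter_upwards [hWnn] with σ h
    have hkey := Real.add_one_le_exp (Winf σ)
    have hid : Ex σ * Real.exp (Winf σ) = 1 := by
      simp only [hExdef]
      rw [← Real.exp_add]
      simp
    refine mul_nonneg (hNnn σ) ?_
    nlinarith [mul_le_mul_of_nonneg_left hkey (hEpos σ).le, hEpos σ]
  have hcφρ : Integrable (fun σ => c σ * (N σ * (1 - Ex σ - Winf σ * Ex σ))) (volume.restrict (Ici (0:ℝ))) := by
    refine Integrable.mono' hcN ((hcmeas.aemeasurable.mul hφρaem).aestronglyMeasurable) ?_
    filter_upwards [hWnn, hφρ_nn] with σ h1 h2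
    rw [Real.norm_eq_abs, abs_of_nonneg (mul_nonneg (hcnn σ) h2)]
    have hE1W : 0 ≤ Ex σ * (1 + Winf σ) := mul_nonneg (hEpos σ).le (by linarith)
    nlinarith [mul_nonneg (mul_nonneg (hcnn σ) (hNnn σ)) hE1W]
  have hcu : Integrable (fun σ => c σ * u σ) (volume.restrict (Ici (0:ℝ))) := by
    refine Integrable.mono' (hWY.const_mul M) ((hcmeas.aemeasurable.mul huaem).aestronglyMeasurable) ?_
    filter_upwards [hWnn, hEle1, hu_nn] with x h1 h2 h3
    rw [Real.norm_eq_abs, abs_of_nonneg (mul_nonneg (hcnn x) h3)]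
    have hule : u x ≤ Winf x * N x := by
      simp only [hudef]
      nlinarith [mul_nonneg (mul_nonneg (hNnn x) h1) (sub_nonneg.2 h2)]
    calc c x * u x ≤ M * u x := mul_le_mul_of_nonneg_right (hM x) h3
      _ ≤ M * (Winf x * N x) := mul_le_mul_of_nonneg_left hule hM0
  have hcm : Integrable (fun σ => c σ * m σ) (volume.restrict (Ici (0:ℝ))) := by
    refine Integrable.mono' (hm_int.const_mul M) ((hcmeas.aemeasurable.mul hmaem).aestronglyMeasurable) ?_
    refine Eventually.of_forall fun σ => ?_
    rw [Real.norm_eq_abs, abs_of_nonneg (mul_nonneg (hcnn σ) (hm_nn σ))]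
    exact mul_le_mul_of_nonneg_right (hM σ) (hm_nn σ)
  -- the positive constants
  set dl : ℝ := ∫ σ, c σ * (N σ * (1 - Ex σ)) ∂(volume.restrict (Ici (0:ℝ))) with hdldef
  set ρ : ℝ := ∫ σ, c σ * (N σ * (1 - Ex σ - Winf σ * Ex σ)) ∂(volume.restrict (Ici (0:ℝ))) with hρdef
  set γ : ℝ := ∫ σ, c σ * u σ ∂(volume.restrict (Ici (0:ℝ))) with hγdef
  have hφδint : IntegrableOn (fun σ => N σ * (1 - Ex σ)) (Ici 0) := by
    refine Integrable.mono' hNint hφδaem.aestronglyMeasurable ?_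
    filter_upwards [hEle1, hφδ_nn] with σ h1 h2
    rw [Real.norm_eq_abs, abs_of_nonneg h2]
    nlinarith [mul_nonneg (hNnn σ) (hEpos σ).le]
  have hdl_pos : 0 < dl := by
    rw [hdldef]
    have h := hcpos (fun σ => N σ * (1 - Ex σ)) hφδint hφδ_nn ?_
    · exact h
    · intro hzero
      apply hWne
      filter_upwards [hzero, hNpos, hWnn] with x h0 hN hW
      simp only [Pi.zero_apply] at h0 ⊢
      have hE1 : 1 - Ex x = 0 := by
        rcases mul_eq_zero.1 h0 with h | h
        · exact absurd h hN.ne'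
        · exact h
      have : Ex x = 1 := by linarith
      have h2 : -Winf x = 0 := (Real.exp_eq_one_iff _).1 (by simpa [hExdef] using this)
      linarith
  have hφρint : IntegrableOn (fun σ => N σ * (1 - Ex σ - Winf σ * Ex σ)) (Ici 0) := by
    refine Integrable.mono' hNint hφρaem.aestronglyMeasurable ?_
    filter_upwards [hWnn, hφρ_nn] with σ h1 h2
    rw [Real.norm_eq_abs, abs_of_nonneg h2]
    have hE1W : 0 ≤ Ex σ * (1 + Winf σ) := mul_nonneg (hEpos σ).le (by linarith)
    nlinarith [mul_nonneg (hNnn σ) hE1W]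
  have hρpos : 0 < ρ := by
    rw [hρdef]
    have h := hcpos (fun σ => N σ * (1 - Ex σ - Winf σ * Ex σ)) hφρint hφρ_nn ?_
    · exact h
    · intro hzero
      apply hWne
      filter_upwards [hzero, hNpos, hWnn] with x h0 hN hW
      simp only [Pi.zero_apply] at h0 ⊢
      have hE1 : 1 - Ex x - Winf x * Ex x = 0 := by
        rcases mul_eq_zero.1 h0 with h | h
        · exact absurd h hN.ne'
        · exact h
      by_contra hne
      have hWpos : 0 < Winf x := lt_of_le_of_ne hW (Ne.symm hne)
      have hkey := Real.add_one_lt_exp (ne_of_gt hWpos)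
      have hid : Ex x * Real.exp (Winf x) = 1 := by
        simp only [hExdef]
        rw [← Real.exp_add]
        simp
      nlinarith [mul_lt_mul_of_pos_left hkey (hEpos x), hEpos x]
  have hγpos : 0 < γ := by
    rw [hγdef]
    have h := hcpos u hu_int hu_nn ?_
    · exact h
    · intro hzero
      apply hWne
      filter_upwards [hzero, hNpos, hWnn] with x h0 hN hW
      simp only [Pi.zero_apply] at h0 ⊢
      simp only [hudef] at h0
      rcases mul_eq_zero.1 h0 with h | h
      · rcases mul_eq_zero.1 h with h' | h'
        · exact absurd h' hN.ne'
        · exact absurd h' (hEpos x).ne'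
      · exact h
  set G : ℝ := α * γ with hGdef
  have hGpos : 0 < G := mul_pos hα0 hγpos
  set ε : ℝ := min (1/2) (ρ / (2 * G)) with hεdef
  have hε0 : 0 < ε := lt_min (by norm_num) (div_pos hρpos (by linarith))
  have hε2 : ε ≤ 1/2 := min_le_left _ _
  have hεG : ε * G ≤ ρ / 2 := by
    have h := min_le_right (1/2 : ℝ) (ρ / (2 * G))
    calc ε * G ≤ ρ / (2 * G) * G := mul_le_mul_of_nonneg_right h hGpos.le
      _ = ρ / 2 := by field_simp
  set s : ℝ := dl * ε / 2 with hsdef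
  have hs0 : 0 < s := by rw [hsdef]; positivity
  set θ : ℝ := 1 - ε / 2 with hθdef2
  have hθ0 : 0 < θ := by rw [hθdef2]; linarith
  have hθ1 : θ < 1 := by rw [hθdef2]; linarith
  set v : ℝ → ℝ := fun x => u x + s * m x with hvdef
  have hvaem : AEMeasurable v (volume.restrict (Ici (0:ℝ))) := huaem.add (hmaem.const_mul s)
  have hv_int : Integrable v (volume.restrict (Ici (0:ℝ))) := hu_int.add (hm_int.const_mul s)
  have hv_nn : ∀ᵐ x ∂(volume.restrict (Ici (0:ℝ))), 0 ≤ v x := by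
    filter_upwards [hu_nn] with x hx
    simp only [hvdef]
    have := hm_nn x
    nlinarith [hs0]
  have hcv : Integrable (fun σ => c σ * v σ) (volume.restrict (Ici (0:ℝ))) := by
    have he : (fun σ => c σ * v σ) = fun σ => c σ * u σ + s * (c σ * m σ) := by
      funext σ; simp only [hvdef]; ring
    rw [he]
    exact hcu.add (hcm.const_mul s)
  set V : ℝ := ∫ x, v x ∂(volume.restrict (Ici (0:ℝ))) with hVdef
  have hV0 : 0 ≤ V := integral_nonneg_of_ae hv_nn
  -- the domination lemma for kernel integrals
  have hdom : ∀ x ∈ Ici (0:ℝ), ∀ g : ℝ → ℝ, AEMeasurable g (volume.restrict (Ici (0:ℝ))) → (∀ᵐ σ ∂(volume.restrict (Ici (0:ℝ))), 0 ≤ g σ) →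
      Integrable (fun σ => c σ * g σ) (volume.restrict (Ici (0:ℝ))) →
      Integrable (fun σ => Θ x σ * g σ) (volume.restrict (Ici (0:ℝ))) ∧
      0 ≤ (∫ σ, Θ x σ * g σ ∂(volume.restrict (Ici (0:ℝ)))) ∧
      (∫ σ, Θ x σ * g σ ∂(volume.restrict (Ici (0:ℝ)))) ≤ α * L * a x * (∫ σ, c σ * g σ ∂(volume.restrict (Ici (0:ℝ)))) ∧
      L * a x * (∫ σ, c σ * g σ ∂(volume.restrict (Ici (0:ℝ)))) ≤ ∫ σ, Θ x σ * g σ ∂(volume.restrict (Ici (0:ℝ))) := by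
    intro x hx g hga hgnn hcg
    have hΘg_nn : ∀ᵐ σ ∂(volume.restrict (Ici (0:ℝ))), 0 ≤ Θ x σ * g σ := by
      filter_upwards [hgnn] with σ h
      exact mul_nonneg (hΘnn x σ) h
    have hbd : ∀ᵐ σ ∂(volume.restrict (Ici (0:ℝ))), Θ x σ * g σ ≤ α * L * a x * (c σ * g σ) := by
      filter_upwards [hmem, hgnn] with σ hσ hg
      calc Θ x σ * g σ ≤ (α * L * (a x * c σ)) * g σ :=
            mul_le_mul_of_nonneg_right (hΘub x hx σ hσ) hg
        _ = α * L * a x * (c σ * g σ) := by ring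
    have hint : Integrable (fun σ => Θ x σ * g σ) (volume.restrict (Ici (0:ℝ))) := by
      refine Integrable.mono' (hcg.const_mul (α * L * a x))
        (((hΘmeas x).aemeasurable.mul hga).aestronglyMeasurable) ?_
      filter_upwards [hΘg_nn, hbd] with σ h1 h2
      rw [Real.norm_eq_abs, abs_of_nonneg h1]
      exact h2
    refine ⟨hint, integral_nonneg_of_ae hΘg_nn, ?_, ?_⟩
    · have h := integral_mono_of_nonneg hΘg_nn (hcg.const_mul (α * L * a x)) hbd
      calc (∫ σ, Θ x σ * g σ ∂(volume.restrict (Ici (0:ℝ)))) ≤ ∫ σ, (α * L * a x) * (c σ * g σ) ∂(volume.restrict (Ici (0:ℝ))) := h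
        _ = α * L * a x * ∫ σ, c σ * g σ ∂(volume.restrict (Ici (0:ℝ))) := integral_const_mul _ _
    · have hlb : ∀ᵐ σ ∂(volume.restrict (Ici (0:ℝ))), (L * a x) * (c σ * g σ) ≤ Θ x σ * g σ := by
        filter_upwards [hmem, hgnn] with σ hσ hg
        calc (L * a x) * (c σ * g σ) = (L * (a x * c σ)) * g σ := by ring
          _ ≤ Θ x σ * g σ := mul_le_mul_of_nonneg_right (hΘlb x hx σ hσ) hg
      have hnn2 : ∀ᵐ σ ∂(volume.restrict (Ici (0:ℝ))), 0 ≤ (L * a x) * (c σ * g σ) := by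
        filter_upwards [hgnn] with σ hg
        exact mul_nonneg (mul_nonneg hL0 (hann x)) (mul_nonneg (hcnn σ) hg)
      have h := integral_mono_of_nonneg hnn2 hint hlb
      calc L * a x * (∫ σ, c σ * g σ ∂(volume.restrict (Ici (0:ℝ)))) = ∫ σ, (L * a x) * (c σ * g σ) ∂(volume.restrict (Ici (0:ℝ))) :=
            (integral_const_mul _ _).symm
        _ ≤ ∫ σ, Θ x σ * g σ ∂(volume.restrict (Ici (0:ℝ))) := h
  -- the final size inequality implies W ≥ L a dl a.e.
  have hWge : ∀ᵐ x ∂(volume.restrict (Ici (0:ℝ))), L * a x * dl ≤ Winf x := by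
    filter_upwards [hWineq, hmem] with x hineq hx
    have hd := hdom x hx _ hφδaem hφδ_nn hcφδ
    have heq : (fun σ => (∫ τ, A τ x σ ∂(volume.restrict (Ici (0:ℝ)))) * N σ * (1 - Real.exp (-Winf σ)))
        = fun σ => Θ x σ * (N σ * (1 - Ex σ)) := by
      funext σ
      simp only [hΘdef, hExdef]
      ring
    rw [heq] at hineq
    calc L * a x * dl = L * a x * ∫ σ, c σ * (N σ * (1 - Ex σ)) ∂(volume.restrict (Ici (0:ℝ))) := by rw [hdldef]
      _ ≤ ∫ σ, Θ x σ * (N σ * (1 - Ex σ)) ∂(volume.restrict (Ici (0:ℝ))) := hd.2.2.2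
      _ ≤ Winf x := hineq
  -- dl * m ≤ u a.e.
  have hum : ∀ᵐ σ ∂(volume.restrict (Ici (0:ℝ))), dl * m σ ≤ u σ := by
    filter_upwards [hWge, hWnn] with σ h hW
    have h1 : dl * (L * a σ) ≤ Winf σ := by
      calc dl * (L * a σ) = L * a σ * dl := by ring
        _ ≤ Winf σ := h
    simp only [hudef, hmdef]
    have hNE : 0 ≤ N σ * Ex σ := mul_nonneg (hNnn σ) (hEpos σ).le
    nlinarith [mul_le_mul_of_nonneg_left h1 hNE]
  -- the key pointwise estimates P0, P1, P2
  have hP : ∀ᵐ x ∂(volume.restrict (Ici (0:ℝ))), 0 ≤ N x * Ex x * (∫ σ, Θ x σ * u σ ∂(volume.restrict (Ici (0:ℝ)))) ∧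
      N x * Ex x * (∫ σ, Θ x σ * u σ ∂(volume.restrict (Ici (0:ℝ)))) ≤ u x - ρ * m x ∧
      N x * Ex x * (∫ σ, Θ x σ * u σ ∂(volume.restrict (Ici (0:ℝ)))) ≤ G * m x := by
    filter_upwards [hWineq, hmem] with x hineq hx
    have hdu := hdom x hx u huaem hu_nn hcu
    have hdρ := hdom x hx _ hφρaem hφρ_nn hcφρ
    have hNE : 0 ≤ N x * Ex x := mul_nonneg (hNnn x) (hEpos x).le
    have heq : (fun σ => (∫ τ, A τ x σ ∂(volume.restrict (Ici (0:ℝ)))) * N σ * (1 - Real.exp (-Winf σ)))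
        = fun σ => Θ x σ * (N σ * (1 - Ex σ)) := by
      funext σ
      simp only [hΘdef, hExdef]
      ring
    rw [heq] at hineq
    have hsplit : (∫ σ, Θ x σ * (N σ * (1 - Ex σ)) ∂(volume.restrict (Ici (0:ℝ))))
        = (∫ σ, Θ x σ * u σ ∂(volume.restrict (Ici (0:ℝ)))) + ∫ σ, Θ x σ * (N σ * (1 - Ex σ - Winf σ * Ex σ)) ∂(volume.restrict (Ici (0:ℝ))) := by
      rw [← integral_add hdu.1 hdρ.1]
      refine integral_congr_ae (Eventually.of_forall fun σ => ?_)
      simp only [hudef]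
      ring
    have hcore : (∫ σ, Θ x σ * u σ ∂(volume.restrict (Ici (0:ℝ)))) ≤ Winf x - L * a x * ρ := by
      have h2 : L * a x * ρ ≤ ∫ σ, Θ x σ * (N σ * (1 - Ex σ - Winf σ * Ex σ)) ∂(volume.restrict (Ici (0:ℝ))) := by
        calc L * a x * ρ
            = L * a x * ∫ σ, c σ * (N σ * (1 - Ex σ - Winf σ * Ex σ)) ∂(volume.restrict (Ici (0:ℝ))) := by rw [hρdef]
          _ ≤ _ := hdρ.2.2.2
      have h3 := hineq
      rw [hsplit] at h3
      linarith
    refine ⟨mul_nonneg hNE hdu.2.1, ?_, ?_⟩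
    · have hh := mul_le_mul_of_nonneg_left hcore hNE
      simp only [hudef, hmdef]
      nlinarith [hh]
    · have h3 : (∫ σ, Θ x σ * u σ ∂(volume.restrict (Ici (0:ℝ)))) ≤ α * L * a x * γ := by
        calc (∫ σ, Θ x σ * u σ ∂(volume.restrict (Ici (0:ℝ)))) ≤ α * L * a x * ∫ σ, c σ * u σ ∂(volume.restrict (Ici (0:ℝ))) := hdu.2.2.1
          _ = α * L * a x * γ := by rw [hγdef]
      have hh := mul_le_mul_of_nonneg_left h3 hNE
      simp only [hGdef, hmdef]
      nlinarith [hh]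
  -- Claim 2: one-step contraction on the order interval generated by v
  have hclaim2 : ∀ (ψ : Lp ℝ 1 (volume.restrict (Ici (0:ℝ)))) (t : ℝ), 0 ≤ t →
      (∀ᵐ x ∂(volume.restrict (Ici (0:ℝ))), |ψ x| ≤ t * v x) → ∀ᵐ x ∂(volume.restrict (Ici (0:ℝ))), |(TS ψ) x| ≤ θ * t * v x := by
    intro ψ t ht hψ
    filter_upwards [hTS ψ, hP, hmem, hu_nn] with x hTSx hPx hx hux
    have hdu := hdom x hx u huaem hu_nn hcu
    have hdm := hdom x hx m hmaem (Eventually.of_forall hm_nn) hcm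
    have hdv := hdom x hx v hvaem hv_nn hcv
    have hNE : 0 ≤ N x * Ex x := mul_nonneg (hNnn x) (hEpos x).le
    have hTSx' : (TS ψ) x = N x * Ex x * ∫ σ, Θ x σ * (ψ σ) ∂(volume.restrict (Ici (0:ℝ))) := by
      rw [hTSx]
    have habs : |∫ σ, Θ x σ * (ψ σ) ∂(volume.restrict (Ici (0:ℝ)))| ≤ ∫ σ, Θ x σ * |ψ σ| ∂(volume.restrict (Ici (0:ℝ))) := by
      have h1 : ‖∫ σ, Θ x σ * (ψ σ) ∂(volume.restrict (Ici (0:ℝ)))‖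
          ≤ ∫ σ, ‖Θ x σ * (ψ σ)‖ ∂(volume.restrict (Ici (0:ℝ))) :=
        norm_integral_le_integral_norm _
      rw [Real.norm_eq_abs] at h1
      refine h1.trans (le_of_eq (integral_congr_ae (Eventually.of_forall fun σ => ?_)))
      simp only [Real.norm_eq_abs, abs_mul, abs_of_nonneg (hΘnn x σ)]
    have hmono : (∫ σ, Θ x σ * |ψ σ| ∂(volume.restrict (Ici (0:ℝ)))) ≤ ∫ σ, Θ x σ * (t * v σ) ∂(volume.restrict (Ici (0:ℝ))) := by
      refine integral_mono_of_nonneg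
        (Eventually.of_forall fun σ => mul_nonneg (hΘnn x σ) (abs_nonneg _)) ?_ ?_
      · have he : (fun σ => Θ x σ * (t * v σ)) = fun σ => t * (Θ x σ * v σ) := by
          funext σ; ring
        rw [he]
        exact hdv.1.const_mul t
      · filter_upwards [hψ] with σ h1
        exact mul_le_mul_of_nonneg_left h1 (hΘnn x σ)
    have hsplit2 : (∫ σ, Θ x σ * (t * v σ) ∂(volume.restrict (Ici (0:ℝ))))
        = t * ((∫ σ, Θ x σ * u σ ∂(volume.restrict (Ici (0:ℝ)))) + s * ∫ σ, Θ x σ * m σ ∂(volume.restrict (Ici (0:ℝ)))) := by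
      have he : (fun σ => Θ x σ * (t * v σ))
          = fun σ => t * (Θ x σ * u σ) + (t * s) * (Θ x σ * m σ) := by
        funext σ; simp only [hvdef]; ring
      rw [he, integral_add (hdu.1.const_mul t) (hdm.1.const_mul (t * s)),
        integral_const_mul, integral_const_mul]
      ring
    have hmum : (∫ σ, Θ x σ * m σ ∂(volume.restrict (Ici (0:ℝ)))) ≤ (1 / dl) * ∫ σ, Θ x σ * u σ ∂(volume.restrict (Ici (0:ℝ))) := by
      rw [← integral_const_mul]
      refine integral_mono_of_nonneg
        (Eventually.of_forall fun σ => mul_nonneg (hΘnn x σ) (hm_nn σ))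
        (hdu.1.const_mul (1 / dl)) ?_
      filter_upwards [hum] with σ h
      have h2 : Θ x σ * (dl * m σ) ≤ Θ x σ * u σ := mul_le_mul_of_nonneg_left h (hΘnn x σ)
      have h3 : Θ x σ * m σ = (1 / dl) * (Θ x σ * (dl * m σ)) := by
        field_simp
      rw [h3]
      exact mul_le_mul_of_nonneg_left h2 (by positivity)
    obtain ⟨hP0, hP1, hP2⟩ := hPx
    have hkey := aux_scalar ε dl ρ G (u x) (m x) (N x * Ex x * (∫ σ, Θ x σ * u σ ∂(volume.restrict (Ici (0:ℝ)))))
      hε0 hε2 hεG hdl_pos hρpos hux (hm_nn x) hP1 hP2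
    -- assemble
    have hQnn := hdu.2.1
    calc |(TS ψ) x| = N x * Ex x * |∫ σ, Θ x σ * (ψ σ) ∂(volume.restrict (Ici (0:ℝ)))| := by
          rw [hTSx', abs_mul, abs_of_nonneg hNE]
      _ ≤ N x * Ex x * ∫ σ, Θ x σ * (t * v σ) ∂(volume.restrict (Ici (0:ℝ))) :=
          mul_le_mul_of_nonneg_left (habs.trans hmono) hNE
      _ = N x * Ex x * (t * ((∫ σ, Θ x σ * u σ ∂(volume.restrict (Ici (0:ℝ)))) + s * ∫ σ, Θ x σ * m σ ∂(volume.restrict (Ici (0:ℝ))))) := by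
          rw [hsplit2]
      _ ≤ N x * Ex x * (t * ((∫ σ, Θ x σ * u σ ∂(volume.restrict (Ici (0:ℝ)))) + s * ((1 / dl) * ∫ σ, Θ x σ * u σ ∂(volume.restrict (Ici (0:ℝ)))))) := by
          apply mul_le_mul_of_nonneg_left _ hNE
          apply mul_le_mul_of_nonneg_left _ ht
          have : 0 ≤ s := hs0.le
          nlinarith [hmum]
      _ = t * ((1 + ε / 2) * (N x * Ex x * (∫ σ, Θ x σ * u σ ∂(volume.restrict (Ici (0:ℝ)))))) := by
          rw [hsdef]
          field_simp
      _ ≤ t * ((1 - ε / 2) * (u x + (dl * ε / 2) * m x)) := by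
          apply mul_le_mul_of_nonneg_left hkey ht
      _ = θ * t * v x := by
          rw [hθdef2, hvdef, hsdef]
          ring
  -- Claim 1: starting estimate
  have hclaim1 : ∀ ψ : Lp ℝ 1 (volume.restrict (Ici (0:ℝ))),
      ∀ᵐ x ∂(volume.restrict (Ici (0:ℝ))), |(TS ψ) x| ≤ (α * M / s * ‖ψ‖) * v x := by
    intro ψ
    have hψint : Integrable (fun σ => ψ σ) (volume.restrict (Ici (0:ℝ))) :=
      L1.integrable_coeFn ψ
    have hψabs : Integrable (fun σ => |ψ σ|) (volume.restrict (Ici (0:ℝ))) := hψint.abs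
    have hcψ : Integrable (fun σ => c σ * |ψ σ|) (volume.restrict (Ici (0:ℝ))) := by
      refine Integrable.mono' (hψabs.const_mul M)
        ((hcmeas.aemeasurable.mul hψabs.aemeasurable).aestronglyMeasurable) ?_
      refine Eventually.of_forall fun σ => ?_
      rw [Real.norm_eq_abs, abs_of_nonneg (mul_nonneg (hcnn σ) (abs_nonneg _))]
      exact mul_le_mul_of_nonneg_right (hM σ) (abs_nonneg _)
    have hnorm2 : (∫ σ, c σ * |ψ σ| ∂(volume.restrict (Ici (0:ℝ)))) ≤ M * ‖ψ‖ := by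
      have h2 : ‖ψ‖ = ∫ σ, |ψ σ| ∂(volume.restrict (Ici (0:ℝ))) := by
        rw [L1.norm_eq_integral_norm]
        simp only [Real.norm_eq_abs]
      rw [h2, ← integral_const_mul]
      refine integral_mono_of_nonneg
        (Eventually.of_forall fun σ => mul_nonneg (hcnn σ) (abs_nonneg _))
        (hψabs.const_mul M)
        (Eventually.of_forall fun σ => mul_le_mul_of_nonneg_right (hM σ) (abs_nonneg _))
    filter_upwards [hTS ψ, hmem, hu_nn] with x hTSx hx hux
    have hd := hdom x hx (fun σ => |ψ σ|) hψabs.aemeasurable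
      (Eventually.of_forall fun σ => abs_nonneg _) hcψ
    have hNE : 0 ≤ N x * Ex x := mul_nonneg (hNnn x) (hEpos x).le
    have hTSx' : (TS ψ) x = N x * Ex x * ∫ σ, Θ x σ * (ψ σ) ∂(volume.restrict (Ici (0:ℝ))) := by
      rw [hTSx]
    have habs : |∫ σ, Θ x σ * (ψ σ) ∂(volume.restrict (Ici (0:ℝ)))|
        ≤ ∫ σ, Θ x σ * |ψ σ| ∂(volume.restrict (Ici (0:ℝ))) := by
      have h1 : ‖∫ σ, Θ x σ * (ψ σ) ∂(volume.restrict (Ici (0:ℝ)))‖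
          ≤ ∫ σ, ‖Θ x σ * (ψ σ)‖ ∂(volume.restrict (Ici (0:ℝ))) :=
        norm_integral_le_integral_norm _
      rw [Real.norm_eq_abs] at h1
      refine h1.trans (le_of_eq (integral_congr_ae (Eventually.of_forall fun σ => ?_)))
      simp only [Real.norm_eq_abs, abs_mul, abs_of_nonneg (hΘnn x σ)]
    have hstep : (∫ σ, Θ x σ * |ψ σ| ∂(volume.restrict (Ici (0:ℝ)))) ≤ α * L * a x * (M * ‖ψ‖) := by
      refine hd.2.2.1.trans ?_
      refine mul_le_mul_of_nonneg_left hnorm2 ?_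
      have := hann x
      positivity
    calc |(TS ψ) x| = N x * Ex x * |∫ σ, Θ x σ * (ψ σ) ∂(volume.restrict (Ici (0:ℝ)))| := by
          rw [hTSx', abs_mul, abs_of_nonneg hNE]
      _ ≤ N x * Ex x * (α * L * a x * (M * ‖ψ‖)) :=
          mul_le_mul_of_nonneg_left (habs.trans hstep) hNE
      _ = (α * M * ‖ψ‖) * m x := by simp only [hmdef]; ring
      _ = (α * M / s * ‖ψ‖) * (s * m x) := by
          field_simp
      _ ≤ (α * M / s * ‖ψ‖) * v x := by
          refine mul_le_mul_of_nonneg_left ?_ ?_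
          · simp only [hvdef]
            linarith
          · have hn := norm_nonneg ψ
            positivity
  -- iterate Claim 2
  have hiter : ∀ (n : ℕ) (ψ : Lp ℝ 1 (volume.restrict (Ici (0:ℝ)))) (t : ℝ), 0 ≤ t →
      (∀ᵐ x ∂(volume.restrict (Ici (0:ℝ))), |ψ x| ≤ t * v x) →
      ∀ᵐ x ∂(volume.restrict (Ici (0:ℝ))), |((TS ^ n) ψ) x| ≤ θ ^ n * t * v x := by
    intro n
    induction n with
    | zero =>
        intro ψ t ht hψ
        simpa [ContinuousLinearMap.one_apply] using hψ
    | succ n ih =>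
        intro ψ t ht hψ
        have h1 := hclaim2 ψ t ht hψ
        have h2 := ih (TS ψ) (θ * t) (mul_nonneg hθ0.le ht) h1
        have hEq : (TS ^ (n + 1)) ψ = (TS ^ n) (TS ψ) := by
          rw [pow_succ]
          rfl
        rw [hEq]
        filter_upwards [h2] with x hx
        calc |((TS ^ n) (TS ψ)) x| ≤ θ ^ n * (θ * t) * v x := hx
          _ = θ ^ (n + 1) * t * v x := by ring
  -- norm bound for the powers
  have hnormb : ∀ (n : ℕ) (ψ : Lp ℝ 1 (volume.restrict (Ici (0:ℝ)))),
      ‖(TS ^ (n + 1)) ψ‖ ≤ (α * M / s * V) * θ ^ n * ‖ψ‖ := by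
    intro n ψ
    have ht0 : 0 ≤ α * M / s * ‖ψ‖ := by
      have hn := norm_nonneg ψ
      positivity
    have h2 := hiter n (TS ψ) (α * M / s * ‖ψ‖) ht0 (hclaim1 ψ)
    have hEq : (TS ^ (n + 1)) ψ = (TS ^ n) (TS ψ) := by
      rw [pow_succ]
      rfl
    rw [hEq, L1.norm_eq_integral_norm]
    have h4 : (∫ x, ‖((TS ^ n) (TS ψ)) x‖ ∂(volume.restrict (Ici (0:ℝ))))
        ≤ ∫ x, (θ ^ n * (α * M / s * ‖ψ‖)) * v x ∂(volume.restrict (Ici (0:ℝ))) := by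
      refine integral_mono_of_nonneg (Eventually.of_forall fun x => norm_nonneg _)
        (hv_int.const_mul _) ?_
      filter_upwards [h2] with x hx
      rw [Real.norm_eq_abs]
      calc |((TS ^ n) (TS ψ)) x| ≤ θ ^ n * (α * M / s * ‖ψ‖) * v x := hx
        _ = (θ ^ n * (α * M / s * ‖ψ‖)) * v x := by ring
    refine h4.trans ?_
    rw [integral_const_mul]
    calc θ ^ n * (α * M / s * ‖ψ‖) * V = (α * M / s * V) * θ ^ n * ‖ψ‖ := by ring
      _ ≤ (α * M / s * V) * θ ^ n * ‖ψ‖ := le_rfl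
  -- operator norm bound and conclusion
  have hop : ∀ n : ℕ, ‖TS ^ (n + 1)‖ ≤ (α * M / s * V) * θ ^ n := by
    intro n
    refine ContinuousLinearMap.opNorm_le_bound _ ?_ fun ψ => ?_
    · positivity
    · calc ‖(TS ^ (n + 1)) ψ‖ ≤ (α * M / s * V) * θ ^ n * ‖ψ‖ := hnormb n ψ
        _ = (α * M / s * V) * θ ^ n * ‖ψ‖ := by ring
  exact aux_specRadius_lt_one TS ((α * M / s * V)) θ hθ0 hθ1 hop
end

section
/- Let p > 0 and let ω(x) = (p^p/Γ(p)) x^{p−1} e^{−p x} for x > 0 be the Gamma density with mean 1 and variance 1/p. Then for every w ≥ 0: (i) ∫_0^∞ ω(x) e^{−w x} dx = (p/(p+w))^p, (ii) ∫_0^∞ x ω(x) e^{−w x} dx = p^{p+1}/(p+w)^{p+1}, and consequently (iii) ∫_0^∞ x ω(x) e^{−w x} dx = (∫_0^∞ ω(x) e^{−w x} dx)^{(p+1)/p}; that is, the effective reproduction number R₀ ∫_0^∞ x ω(x)e^{−wx} dx equals R₀ s^{1+1/p}, where s = ∫_0^∞ ω(x)e^{−wx} dx is the remaining susceptible fraction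 and R₀ > 0 is any constant. -/
open MeasureTheory Set

/-- moment identities for the Gamma density with shape p and rate p, and the
resulting power-law form of the effective reproduction number R₀ s^{1+1/p}. -/
theorem gamma_density_power_law
    (p : ℝ) (hp : 0 < p)
    (ω : ℝ → ℝ)
    (hω : ∀ x ∈ Ioi (0:ℝ), ω x = p ^ p / Real.Gamma p * x ^ (p - 1) * Real.exp (-(p * x))) :
    ∀ w : ℝ, 0 ≤ w →
      (∫ x in Ioi (0:ℝ), ω x * Real.exp (-(w * x))) = (p / (p + w)) ^ p ∧
      (∫ x in Ioi (0:ℝ), x * ω x * Real.exp (-(w * x)))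
        = p ^ (p + 1) / (p + w) ^ (p + 1) ∧
      (∫ x in Ioi (0:ℝ), x * ω x * Real.exp (-(w * x)))
        = (∫ x in Ioi (0:ℝ), ω x * Real.exp (-(w * x))) ^ ((p + 1) / p) ∧
      ∀ R₀ : ℝ, 0 < R₀ →
        R₀ * ∫ x in Ioi (0:ℝ), x * ω x * Real.exp (-(w * x))
          = R₀ * (∫ x in Ioi (0:ℝ), ω x * Real.exp (-(w * x))) ^ (1 + 1 / p) := by
  intro w hw
  have hpw : 0 < p + w := by linarith
  have hΓ : 0 < Real.Gamma p := Real.Gamma_pos_of_pos hp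
  have h1 : (∫ x in Ioi (0:ℝ), ω x * Real.exp (-(w * x))) = (p / (p + w)) ^ p := by
    have : (∫ x in Ioi (0:ℝ), ω x * Real.exp (-(w * x)))
        = ∫ x in Ioi (0:ℝ), p ^ p / Real.Gamma p * (x ^ (p - 1) * Real.exp (-((p + w) * x))) := by
      refine setIntegral_congr_fun measurableSet_Ioi (fun x hx => ?_)
      rw [hω x hx, show -((p + w) * x) = -(p * x) + -(w * x) by ring, Real.exp_add]
      ring
    rw [this, integral_const_mul, Real.integral_rpow_mul_exp_neg_mul_Ioi hp hpw,
      Real.div_rpow hp.le hpw.le, Real.div_rpow (by norm_num) hpw.le, Real.one_rpow]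
    field_simp
  have h2 : (∫ x in Ioi (0:ℝ), x * ω x * Real.exp (-(w * x)))
      = p ^ (p + 1) / (p + w) ^ (p + 1) := by
    have : (∫ x in Ioi (0:ℝ), x * ω x * Real.exp (-(w * x)))
        = ∫ x in Ioi (0:ℝ), p ^ p / Real.Gamma p * (x ^ (p + 1 - 1) * Real.exp (-((p + w) * x))) := by
      refine setIntegral_congr_fun measurableSet_Ioi (fun x hx => ?_)
      have hx0 : (0:ℝ) < x := hx
      rw [hω x hx, show -((p + w) * x) = -(p * x) + -(w * x) by ring, Real.exp_add]
      have hx1 : x ^ (p + 1 - 1) = x * x ^ (p - 1) := by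
        rw [show p + 1 - 1 = 1 + (p - 1) by ring, Real.rpow_add hx0, Real.rpow_one]
      rw [hx1]
      ring
    rw [this, integral_const_mul, Real.integral_rpow_mul_exp_neg_mul_Ioi (by linarith) hpw,
      Real.Gamma_add_one hp.ne', Real.div_rpow (by norm_num) hpw.le, Real.one_rpow,
      Real.rpow_add hp, Real.rpow_one]
    field_simp
  refine ⟨h1, h2, ?_, ?_⟩
  · rw [h1, h2, ← Real.rpow_mul (div_nonneg hp.le hpw.le),
      show p * ((p + 1) / p) = p + 1 by field_simp,
      Real.div_rpow hp.le hpw.le]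
  · intro R₀ _
    rw [h1, h2, show (1 : ℝ) + 1 / p = (p + 1) / p by field_simp,
      ← Real.rpow_mul (div_nonneg hp.le hpw.le),
      show p * ((p + 1) / p) = p + 1 by field_simp,
      Real.div_rpow hp.le hpw.le]
end

section
/- Let F(w) = L ∫_Ω c(σ)N(σ)(1 − e^{−a(σ)w}) dσ for w ≥ 0, and set R₀ = L ∫_Ω c N a dx. If R₀ > 1, then: (i) F has a unique positive fixed point v > 0 with F(v) = v; (ii) F(w) > w for all 0 < w < v; and (iii) every w > 0 satisfying w ≥ F(w) (in particular any solution of w = Q_∞ + F(w) with Q_∞ ≥ 0 and w > 0) satisfies w ≥ v, so that the final size obeys 1 − e^{−a(x)w} ≥ 1 − e^{−a(x)v} for all x. -/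
open MeasureTheory Set

private lemma fsl_strictConcave :
    StrictConcaveOn ℝ Set.univ (fun t : ℝ => 1 - Real.exp (-t)) := by
  have hd : ∀ x : ℝ, HasDerivAt (fun t : ℝ => 1 - Real.exp (-t)) (Real.exp (-x)) x := by
    intro x
    have h1 : HasDerivAt (fun t : ℝ => -t) (-1) x := (hasDerivAt_id x).neg
    have h2 := (Real.hasDerivAt_exp (-x)).comp x h1
    have h3 := (hasDerivAt_const x (1:ℝ)).sub h2
    exact h3.congr_deriv (by simp)
  have hd2 : ∀ x : ℝ, HasDerivAt (fun t : ℝ => Real.exp (-t)) (-Real.exp (-x)) x := by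
    intro x
    have h1 : HasDerivAt (fun t : ℝ => -t) (-1) x := (hasDerivAt_id x).neg
    have h2 := (Real.hasDerivAt_exp (-x)).comp x h1
    exact h2.congr_deriv (by simp)
  have hderiv : deriv (fun t : ℝ => 1 - Real.exp (-t)) = fun x => Real.exp (-x) := by
    funext x; exact (hd x).deriv
  apply strictConcaveOn_of_deriv2_neg convex_univ
  · exact (Continuous.sub continuous_const (Real.continuous_exp.comp continuous_neg)).continuousOn
  · intro x _
    simp only [Function.iterate_succ, Function.iterate_zero, Function.comp_apply, id_eq,
      Function.comp]
    rw [hderiv, (hd2 x).deriv]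
    simpa using Real.exp_pos (-x)

/-- chord inequality, strict version -/
private lemma fsl_chord_lt {w v α : ℝ} (hw : 0 < w) (hwv : w < v) (hα : 0 < α) :
    w * (1 - Real.exp (-(α * v))) < v * (1 - Real.exp (-(α * w))) := by
  set s := α * w with hs
  set t := α * v with ht
  have hs0 : 0 < s := mul_pos hα hw
  have hst : s < t := by apply mul_lt_mul_of_pos_left hwv hα
  have ht0 : 0 < t := mul_pos hα (hw.trans hwv)
  have h := fsl_strictConcave.2 (mem_univ t) (mem_univ (0:ℝ)) ht0.ne'
    (div_pos hs0 ht0)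
    (show (0:ℝ) < 1 - s/t by rw [sub_pos]; exact (div_lt_one ht0).mpr hst) (by ring)
  simp only [smul_eq_mul, mul_zero, add_zero, neg_zero, Real.exp_zero, sub_self] at h
  -- h : s/t * (1 - exp (-t)) < 1 - exp (-(s/t * t))
  rw [div_mul_cancel₀ _ ht0.ne'] at h
  have h2 : s * (1 - Real.exp (-t)) < t * (1 - Real.exp (-s)) := by
    have := mul_lt_mul_of_pos_left h ht0
    calc s * (1 - Real.exp (-t)) = t * (s/t * (1 - Real.exp (-t))) := by field_simp
    _ < t * (1 - Real.exp (-s)) := this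
  -- convert to w, v
  have : α * (w * (1 - Real.exp (-(α*v)))) < α * (v * (1 - Real.exp (-(α*w)))) := by
    calc α * (w * (1 - Real.exp (-(α*v)))) = s * (1 - Real.exp (-t)) := by rw [hs, ht]; ring
    _ < t * (1 - Real.exp (-s)) := h2
    _ = α * (v * (1 - Real.exp (-(α*w)))) := by rw [hs, ht]; ring
  exact lt_of_mul_lt_mul_left this hα.le

private lemma fsl_chord_le {w v α : ℝ} (hw : 0 < w) (hwv : w < v) (hα : 0 ≤ α) :
    w * (1 - Real.exp (-(α * v))) ≤ v * (1 - Real.exp (-(α * w))) := by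
  rcases eq_or_lt_of_le hα with h | h
  · simp [← h]
  · exact (fsl_chord_lt hw hwv h).le

private lemma fsl_one_sub_exp_le {t : ℝ} : 1 - Real.exp (-t) ≤ t := by
  have := Real.add_one_le_exp (-t); linarith

private lemma fsl_texp_le (t : ℝ) : t * Real.exp (-t) ≤ 1 - Real.exp (-t) := by
  have h1 := Real.add_one_le_exp t
  have h2 : Real.exp (-t) * Real.exp t = 1 := by rw [← Real.exp_add]; simp
  nlinarith [Real.exp_pos (-t)]

private lemma fsl_exp_nonneg_le_one {t : ℝ} (ht : 0 ≤ t) :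
    0 ≤ 1 - Real.exp (-t) ∧ 1 - Real.exp (-t) ≤ 1 := by
  constructor
  · have : Real.exp (-t) ≤ 1 := Real.exp_le_one_iff.mpr (by linarith)
    linarith
  · have := Real.exp_pos (-t); linarith

/-- The scalar final size map `F(w) = L ∫_Ω c N (1 - e^{-a w})` under separable mixing. -/
noncomputable def finalSizeMap {n : ℕ} (Ω : Set (Fin n → ℝ))
    (a c N : (Fin n → ℝ) → ℝ) (L : ℝ) (w : ℝ) : ℝ :=
  L * ∫ σ in Ω, c σ * N σ * (1 - Real.exp (-(a σ * w)))

/-- if R₀ > 1 the final size map has a unique positive fixed point v,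
F(w) > w on (0,v), and every w > 0 with w ≥ F(w) satisfies w ≥ v, so the final size is
bounded below by 1 - e^{-a(x)v}. -/
theorem final_size_lower_bound
    {n : ℕ} (Ω : Set (Fin n → ℝ)) (hΩ : MeasurableSet Ω)
    (a c N : (Fin n → ℝ) → ℝ)
    (hameas : Measurable a) (hcmeas : Measurable c) (hNmeas : Measurable N)
    (hann : ∀ x, 0 ≤ a x) (hcnn : ∀ x, 0 ≤ c x) (hNnn : ∀ x, 0 ≤ N x)
    (hcN : IntegrableOn (fun x => c x * N x) Ω)
    (hcNa : IntegrableOn (fun x => c x * N x * a x) Ω)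
    (hpos : 0 < ∫ x in Ω, c x * N x * a x)
    (L : ℝ) (hL : 0 < L)
    (hR0 : 1 < L * ∫ x in Ω, c x * N x * a x) :
    ∃ v : ℝ, 0 < v ∧ finalSizeMap Ω a c N L v = v ∧
      (∀ v' : ℝ, 0 < v' → finalSizeMap Ω a c N L v' = v' → v' = v) ∧
      (∀ w : ℝ, 0 < w → w < v → w < finalSizeMap Ω a c N L w) ∧
      (∀ w : ℝ, 0 < w → finalSizeMap Ω a c N L w ≤ w →
        v ≤ w ∧ ∀ x, 1 - Real.exp (-(a x * v)) ≤ 1 - Real.exp (-(a x * w))) := by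
  classical
  set I : ℝ → ℝ := fun w => ∫ x in Ω, c x * N x * (1 - Real.exp (-(a x * w))) with hI
  have hFdef : ∀ w, finalSizeMap Ω a c N L w = L * I w := fun w => rfl
  -- measurability
  have hmeas1 : ∀ w : ℝ, Measurable fun x => c x * N x * (1 - Real.exp (-(a x * w))) := by
    intro w
    exact (hcmeas.mul hNmeas).mul
      (measurable_const.sub (((hameas.mul_const w).neg).exp))
  have hmeas2 : ∀ w : ℝ, Measurable fun x => c x * N x * a x * Real.exp (-(a x * w)) := by
    intro w
    exact ((hcmeas.mul hNmeas).mul hameas).mul (((hameas.mul_const w).neg).exp)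
  -- integrability
  have hIint : ∀ w : ℝ, 0 ≤ w →
      IntegrableOn (fun x => c x * N x * (1 - Real.exp (-(a x * w)))) Ω := by
    intro w hw
    refine hcN.mono' (hmeas1 w).aestronglyMeasurable ?_
    filter_upwards with x
    have ht := fsl_exp_nonneg_le_one (mul_nonneg (hann x) hw)
    rw [Real.norm_eq_abs, abs_of_nonneg (mul_nonneg (mul_nonneg (hcnn x) (hNnn x)) ht.1)]
    calc c x * N x * (1 - Real.exp (-(a x * w)))
        ≤ c x * N x * 1 := by
          exact mul_le_mul_of_nonneg_left ht.2 (mul_nonneg (hcnn x) (hNnn x))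
      _ = c x * N x := mul_one _
  have hGa : ∀ w : ℝ, 0 ≤ w →
      IntegrableOn (fun x => c x * N x * a x * Real.exp (-(a x * w))) Ω := by
    intro w hw
    refine hcNa.mono' (hmeas2 w).aestronglyMeasurable ?_
    filter_upwards with x
    have he1 : Real.exp (-(a x * w)) ≤ 1 := by
      rw [Real.exp_le_one_iff]
      have := mul_nonneg (hann x) hw; linarith
    have hnn : 0 ≤ c x * N x * a x := mul_nonneg (mul_nonneg (hcnn x) (hNnn x)) (hann x)
    rw [Real.norm_eq_abs, abs_of_nonneg (mul_nonneg hnn (Real.exp_pos _).le)]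
    calc c x * N x * a x * Real.exp (-(a x * w)) ≤ c x * N x * a x * 1 :=
          mul_le_mul_of_nonneg_left he1 hnn
      _ = c x * N x * a x := mul_one _
  -- the key strict subhomogeneity inequality
  have key : ∀ w v : ℝ, 0 < w → w < v → w * (L * I v) < v * (L * I w) := by
    intro w v hw hwv
    have hw0 : (0:ℝ) ≤ w := hw.le
    have hv0 : (0:ℝ) ≤ v := (hw.trans hwv).le
    set D : (Fin n → ℝ) → ℝ := fun x =>
      v * (c x * N x * (1 - Real.exp (-(a x * w)))) -
        w * (c x * N x * (1 - Real.exp (-(a x * v)))) with hD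
    have hDint : IntegrableOn D Ω :=
      ((hIint w hw0).const_mul v).sub ((hIint v hv0).const_mul w)
    have hDnn : ∀ x, 0 ≤ D x := by
      intro x
      have hch := fsl_chord_le hw hwv (hann x)
      have hcNx : 0 ≤ c x * N x := mul_nonneg (hcnn x) (hNnn x)
      have : D x = (c x * N x) *
          (v * (1 - Real.exp (-(a x * w))) - w * (1 - Real.exp (-(a x * v)))) := by
        rw [hD]; ring
      rw [this]
      exact mul_nonneg hcNx (by linarith)
    have hsupp : Function.support (fun x => c x * N x * a x) ⊆ Function.support D := by
      intro x hx
      have h1 : 0 < c x * N x * a x :=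
        lt_of_le_of_ne (mul_nonneg (mul_nonneg (hcnn x) (hNnn x)) (hann x)) (Ne.symm hx)
      have ha : 0 < a x := by
        rcases (hann x).lt_or_eq with h | h
        · exact h
        · rw [← h, mul_zero] at h1; exact absurd h1 (lt_irrefl 0)
      have hcNx : 0 < c x * N x := by
        rcases (mul_nonneg (hcnn x) (hNnn x)).lt_or_eq with h | h
        · exact h
        · rw [← h, zero_mul] at h1; exact absurd h1 (lt_irrefl 0)
      have hch := fsl_chord_lt hw hwv ha
      have hDx : 0 < D x := by
        have : D x = (c x * N x) *
            (v * (1 - Real.exp (-(a x * w))) - w * (1 - Real.exp (-(a x * v)))) := by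
          rw [hD]; ring
        rw [this]
        exact mul_pos hcNx (by linarith)
      exact hDx.ne'
    have hμ1 : 0 < volume (Function.support (fun x => c x * N x * a x) ∩ Ω) := by
      refine (setIntegral_pos_iff_support_of_nonneg_ae ?_ hcNa).1 hpos
      exact Filter.Eventually.of_forall fun x =>
        mul_nonneg (mul_nonneg (hcnn x) (hNnn x)) (hann x)
    have hμ2 : 0 < volume (Function.support D ∩ Ω) :=
      hμ1.trans_le (measure_mono (inter_subset_inter_left _ hsupp))
    have hDpos : 0 < ∫ x in Ω, D x :=
      (setIntegral_pos_iff_support_of_nonneg_ae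
        (Filter.Eventually.of_forall fun x => hDnn x) hDint).2 hμ2
    have hsplit : ∫ x in Ω, D x = v * I w - w * I v := by
      rw [hD]
      rw [integral_sub ((hIint w hw0).const_mul v) ((hIint v hv0).const_mul w),
        integral_const_mul, integral_const_mul]
    rw [hsplit] at hDpos
    nlinarith
  -- upper bound:  L * I w ≤ L * ∫ cN  for w ≥ 0
  have hIub : ∀ w : ℝ, 0 ≤ w → I w ≤ ∫ x in Ω, c x * N x := by
    intro w hw
    refine integral_mono (hIint w hw) hcN ?_
    intro x
    have ht := fsl_exp_nonneg_le_one (mul_nonneg (hann x) hw)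
    calc c x * N x * (1 - Real.exp (-(a x * w))) ≤ c x * N x * 1 :=
          mul_le_mul_of_nonneg_left ht.2 (mul_nonneg (hcnn x) (hNnn x))
      _ = c x * N x := mul_one _
  -- lower bound:  w * ∫ cNa e^{-aw} ≤ I w  for w ≥ 0
  have hIlb : ∀ w : ℝ, 0 ≤ w →
      w * ∫ x in Ω, c x * N x * a x * Real.exp (-(a x * w)) ≤ I w := by
    intro w hw
    rw [← integral_const_mul]
    refine integral_mono ((hGa w hw).const_mul w) (hIint w hw) ?_
    intro x
    have ht := fsl_texp_le (a x * w)
    have hcNx : 0 ≤ c x * N x := mul_nonneg (hcnn x) (hNnn x)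
    have := mul_le_mul_of_nonneg_left ht hcNx
    calc w * (c x * N x * a x * Real.exp (-(a x * w)))
        = c x * N x * (a x * w * Real.exp (-(a x * w))) := by ring
      _ ≤ c x * N x * (1 - Real.exp (-(a x * w))) := this
  -- continuity of the (truncated) maps
  have hcontmax : ∀ x : Fin n → ℝ, Continuous fun w : ℝ => Real.exp (-(a x * max w 0)) := by
    intro x
    exact Real.continuous_exp.comp
      ((continuous_const.mul (continuous_id.max continuous_const)).neg)
  have hFc : Continuous fun w : ℝ =>
      ∫ x in Ω, c x * N x * (1 - Real.exp (-(a x * max w 0))) := by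
    refine continuous_of_dominated (bound := fun x => c x * N x)
      (fun w => (hmeas1 (max w 0)).aestronglyMeasurable) ?_ hcN ?_
    · intro w
      filter_upwards with x
      have ht := fsl_exp_nonneg_le_one (mul_nonneg (hann x) (le_max_right w 0))
      rw [Real.norm_eq_abs, abs_of_nonneg (mul_nonneg (mul_nonneg (hcnn x) (hNnn x)) ht.1)]
      calc c x * N x * (1 - Real.exp (-(a x * max w 0))) ≤ c x * N x * 1 :=
            mul_le_mul_of_nonneg_left ht.2 (mul_nonneg (hcnn x) (hNnn x))
        _ = c x * N x := mul_one _
    · filter_upwards with x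
      exact continuous_const.mul (continuous_const.sub (hcontmax x))
  have hψc : Continuous fun w : ℝ =>
      ∫ x in Ω, c x * N x * a x * Real.exp (-(a x * max w 0)) := by
    refine continuous_of_dominated (bound := fun x => c x * N x * a x)
      (fun w => (hmeas2 (max w 0)).aestronglyMeasurable) ?_ hcNa ?_
    · intro w
      filter_upwards with x
      have hnn : 0 ≤ c x * N x * a x := mul_nonneg (mul_nonneg (hcnn x) (hNnn x)) (hann x)
      have he1 : Real.exp (-(a x * max w 0)) ≤ 1 := by
        rw [Real.exp_le_one_iff]
        have := mul_nonneg (hann x) (le_max_right w 0); linarith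
      rw [Real.norm_eq_abs, abs_of_nonneg (mul_nonneg hnn (Real.exp_pos _).le)]
      calc c x * N x * a x * Real.exp (-(a x * max w 0)) ≤ c x * N x * a x * 1 :=
            mul_le_mul_of_nonneg_left he1 hnn
        _ = c x * N x * a x := mul_one _
    · filter_upwards with x
      exact continuous_const.mul (hcontmax x)
  set ψ : ℝ → ℝ := fun w => ∫ x in Ω, c x * N x * a x * Real.exp (-(a x * max w 0)) with hψ
  have hψ0 : ψ 0 = ∫ x in Ω, c x * N x * a x := by
    simp [hψ]
  -- find δ > 0 with 1 < L * ψ δ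
  have htd : Filter.Tendsto (fun w => L * ψ w) (nhds 0) (nhds (L * ψ 0)) :=
    ((continuous_const.mul hψc).tendsto 0)
  have hev : ∀ᶠ w in nhds (0:ℝ), 1 < L * ψ w := by
    refine htd.eventually (eventually_gt_nhds ?_)
    rw [hψ0]; exact hR0
  have hev' : ∀ᶠ w in nhdsWithin (0:ℝ) (Set.Ioi 0), 1 < L * ψ w ∧ w ∈ Set.Ioi (0:ℝ) :=
    (hev.filter_mono nhdsWithin_le_nhds).and self_mem_nhdsWithin
  obtain ⟨δ, hδψ, hδ0'⟩ := hev'.exists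
  have hδ0 : (0:ℝ) < δ := hδ0'
  -- δ < F δ
  have hFδ : δ < L * I δ := by
    have h1 : δ * ∫ x in Ω, c x * N x * a x * Real.exp (-(a x * δ)) ≤ I δ := hIlb δ hδ0.le
    have h2 : ψ δ = ∫ x in Ω, c x * N x * a x * Real.exp (-(a x * δ)) := by
      rw [hψ]; simp only [max_eq_left hδ0.le]
    have h3 : 1 < L * ψ δ := hδψ
    rw [h2] at h3
    nlinarith
  -- the big endpoint
  set M : ℝ := L * (∫ x in Ω, c x * N x) + 1 with hM
  have hcNnn : 0 ≤ ∫ x in Ω, c x * N x :=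
    integral_nonneg fun x => mul_nonneg (hcnn x) (hNnn x)
  have hMub : ∀ w : ℝ, 0 ≤ w → L * I w ≤ M - 1 := by
    intro w hw
    have := hIub w hw
    have := mul_le_mul_of_nonneg_left this hL.le
    rw [hM]; linarith
  have hM0 : 0 < M := by rw [hM]; nlinarith
  have hδM : δ < M := by
    have h1 := hMub δ hδ0.le
    linarith
  -- IVT
  set g : ℝ → ℝ := fun w =>
    L * (∫ x in Ω, c x * N x * (1 - Real.exp (-(a x * max w 0)))) - w with hg
  have hgc : Continuous g := (continuous_const.mul hFc).sub continuous_id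
  have hgδ : 0 < g δ := by
    have : (∫ x in Ω, c x * N x * (1 - Real.exp (-(a x * max δ 0)))) = I δ := by
      simp only [max_eq_left hδ0.le, hI]
    rw [hg]; simp only [this]; linarith
  have hgM : g M ≤ 0 := by
    have h1 : (∫ x in Ω, c x * N x * (1 - Real.exp (-(a x * max M 0)))) = I M := by
      simp only [max_eq_left hM0.le, hI]
    have h2 := hMub M hM0.le
    rw [hg]; simp only [h1]; linarith
  have hiv : (0:ℝ) ∈ g '' (Set.Icc δ M) := by
    apply intermediate_value_Icc' hδM.le hgc.continuousOn
    exact ⟨hgM, hgδ.le⟩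
  obtain ⟨v, hvmem, hgv⟩ := hiv
  have hvpos : 0 < v := hδ0.trans_le hvmem.1
  have hfix : L * I v = v := by
    have : (∫ x in Ω, c x * N x * (1 - Real.exp (-(a x * max v 0)))) = I v := by
      simp only [max_eq_left hvpos.le, hI]
    rw [hg] at hgv; simp only [this] at hgv; linarith
  -- part (ii)
  have claim2 : ∀ w : ℝ, 0 < w → w < v → w < L * I w := by
    intro w hw hwv
    have h := key w v hw hwv
    rw [hfix] at h
    have : v * w < v * (L * I w) := by nlinarith
    exact lt_of_mul_lt_mul_left this hvpos.le
  refine ⟨v, hvpos, (hFdef v).trans hfix, ?_, ?_, ?_⟩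
  · -- uniqueness
    intro v' hv' hv'fix
    rw [hFdef] at hv'fix
    rcases lt_trichotomy v' v with h | h | h
    · have hc := claim2 v' hv' h
      rw [hv'fix] at hc
      exact absurd hc (lt_irrefl v')
    · exact h
    · have hk := key v v' hvpos h
      rw [hfix, hv'fix] at hk
      nlinarith
  · -- F(w) > w on (0, v)
    intro w hw hwv
    rw [hFdef]
    exact claim2 w hw hwv
  · -- lower bound for supersolutions
    intro w hw hwF
    rw [hFdef] at hwF
    have hvw : v ≤ w := by
      by_contra h
      push_neg at h
      exact absurd (lt_of_lt_of_le (claim2 w hw h) hwF) (lt_irrefl w)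
    refine ⟨hvw, fun x => ?_⟩
    have : Real.exp (-(a x * w)) ≤ Real.exp (-(a x * v)) := by
      apply Real.exp_le_exp.mpr
      have := mul_le_mul_of_nonneg_left hvw (hann x)
      linarith
    linarith
end
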